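/- arXiv:2103.15791 — 10 statements merged into one kernel-verified Lean document; each statement's English description precedes it below -/
import Mathlib

section
/- Let ℓ : ℕ → ℚ be defined by ℓ_0 = 0, ℓ_1 = 1, and ℓ_{n+1} = 2^{1-n} Σ_{k=0}^{n} C(n,k) ℓ_k for n ≥ 1, and let ℓ̂_n := Σ_{k=0}^{n} (-1)^{n-k} C(n,k) ℓ_k be its binomial (Poisson) transform. Then for every integer n ≥ 2, ℓ̂_n = (-1)^{n+1} · Q_{n-2} · ( 1/Q_0 + 1/Q_1 + ⋯ + 1/Q_{n-2} ). -/
/-- `Q m = ∏_{k=1}^{m} (1 - 2^{-k})`, with `Q 0 = 1`. -/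
def Q (m : ℕ) : ℚ :=
  ∏ k ∈ Finset.range m, (1 - 1 / 2 ^ (k + 1))

lemma Qpos (m : ℕ) : 0 < Q m := by
  unfold Q
  apply Finset.prod_pos
  intro k _
  have h1 : (1:ℚ)/2^(k+1) < 1 := by
    rw [div_lt_one (by positivity)]
    exact one_lt_pow₀ (by norm_num) (by omega)
  linarith

lemma two_zpow (k : ℕ) : (2:ℚ)^((1:ℤ) - (k:ℤ)) = 2 / 2^k := by
  rw [zpow_sub₀ (by norm_num : (2:ℚ) ≠ 0), zpow_one, zpow_natCast]

lemma half_pow (m : ℕ) : ∑ t ∈ Finset.range (m+1), ((m.choose t : ℚ)) * (-1/2)^t = (1/2)^m := by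
  have := add_pow (-1/2 : ℚ) 1 m
  simp only [one_pow, mul_one] at this
  rw [show ∑ t ∈ Finset.range (m+1), ((m.choose t : ℚ)) * (-1/2)^t
      = ∑ t ∈ Finset.range (m+1), (-1/2:ℚ)^t * (m.choose t) from
    Finset.sum_congr rfl fun t _ => mul_comm _ _, ← this]
  norm_num

lemma Skey (ℓ : ℕ → ℚ) (h0 : ℓ 0 = 0) (h1 : ℓ 1 = 1)
    (hrec : ∀ n : ℕ, 1 ≤ n →
      ℓ (n + 1) = (2 : ℚ) ^ ((1 : ℤ) - (n : ℤ)) *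
        ∑ k ∈ Finset.range (n + 1), (n.choose k : ℚ) * ℓ k)
    (n : ℕ) (hn : 1 ≤ n) :
    (∑ k ∈ Finset.range (n+2), (-1:ℚ)^k * ((n+1).choose k : ℚ) * ℓ k)
      = (1 - 2/2^n) * (∑ k ∈ Finset.range (n+1), (-1:ℚ)^k * (n.choose k : ℚ) * ℓ k) - 1 := by
  set S := ∑ k ∈ Finset.range (n+1), (-1:ℚ)^k * (n.choose k : ℚ) * ℓ k with hS
  -- U = -S
  have hU : (∑ k ∈ Finset.range (n+1), (-1:ℚ)^k * (n.choose (k+1) : ℚ) * ℓ (k+1)) = -S := by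
    have hS' : S = ∑ k ∈ Finset.range n, (-1:ℚ)^(k+1) * (n.choose (k+1):ℚ) * ℓ (k+1) := by
      rw [hS, Finset.sum_range_succ' _ n, h0]
      simp
    rw [Finset.sum_range_succ, Nat.choose_succ_self, hS']
    push_cast
    rw [← Finset.sum_neg_distrib]
    simp only [mul_zero, zero_mul, add_zero]
    refine Finset.sum_congr rfl fun k _ => ?_
    rw [pow_succ]
    ring
  -- D = (2/2^n) * S
  have hD : (∑ k ∈ Finset.range (n+1),
        (-1:ℚ)^k * (n.choose k:ℚ) * ((2/2^k) * ∑ i ∈ Finset.range (k+1), ((k.choose i:ℚ)) * ℓ i))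
      = (2/2^n) * S := by
    have step1 : (∑ k ∈ Finset.range (n+1),
          (-1:ℚ)^k * (n.choose k:ℚ) * ((2/2^k) * ∑ i ∈ Finset.range (k+1), ((k.choose i:ℚ)) * ℓ i))
        = ∑ k ∈ Finset.range (n+1), ∑ i ∈ Finset.range (k+1),
            (-1:ℚ)^k * (n.choose k:ℚ) * (2/2^k) * (k.choose i:ℚ) * ℓ i := by
      refine Finset.sum_congr rfl fun k _ => ?_
      rw [Finset.mul_sum, Finset.mul_sum]
      refine Finset.sum_congr rfl fun i _ => ?_
      ring
    rw [step1]
    have swap : (∑ k ∈ Finset.range (n+1), ∑ i ∈ Finset.range (k+1),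
            (-1:ℚ)^k * (n.choose k:ℚ) * (2/2^k) * (k.choose i:ℚ) * ℓ i)
        = ∑ i ∈ Finset.range (n+1), ∑ k ∈ Finset.Ico i (n+1),
            (-1:ℚ)^k * (n.choose k:ℚ) * (2/2^k) * (k.choose i:ℚ) * ℓ i := by
      simp only [Finset.range_eq_Ico]
      rw [← Finset.sum_Ico_Ico_comm 0 (n+1)
        (fun i k => (-1:ℚ)^k * (n.choose k:ℚ) * (2/2^k) * (k.choose i:ℚ) * ℓ i)]
    rw [swap]
    rw [Finset.mul_sum]
    refine Finset.sum_congr rfl fun i hi => ?_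
    have hi' : i ≤ n := Nat.lt_succ_iff.mp (Finset.mem_range.mp hi)
    rw [Finset.sum_Ico_eq_sum_range]
    have hcard : n + 1 - i = (n - i) + 1 := by omega
    rw [hcard]
    have inner : ∀ t ∈ Finset.range ((n-i)+1),
        (-1:ℚ)^(i+t) * (n.choose (i+t):ℚ) * (2/2^(i+t)) * ((i+t).choose i:ℚ) * ℓ i
        = ((-1:ℚ)^i * (n.choose i:ℚ) * (2/2^i) * ℓ i) * (((n-i).choose t : ℚ) * (-1/2)^t) := by
      intro t ht
      have ht' : t ≤ n - i := Nat.lt_succ_iff.mp (Finset.mem_range.mp ht)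
      have hle1 : i + t ≤ n := by omega
      have hle2 : i ≤ i + t := Nat.le_add_right i t
      have hcc : ((n.choose (i+t) : ℚ)) * ((i+t).choose i : ℚ)
          = (n.choose i : ℚ) * ((n-i).choose ((i+t)-i) : ℚ) := by
        rw_mod_cast [Nat.choose_mul hle2]
      have hts : (i+t) - i = t := by omega
      rw [hts] at hcc
      have hpow : ((-1:ℚ))^(i+t) = (-1)^i * (-1)^t := pow_add _ _ _
      have h2pow : (2:ℚ)^(i+t) = 2^i * 2^t := pow_add _ _ _
      have h2i : (2:ℚ)^i ≠ 0 := by positivity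
      have h2t : (2:ℚ)^t ≠ 0 := by positivity
      rw [hpow, h2pow]
      field_simp
      have hh : (-1/2:ℚ)^t * 2^t = (-1)^t := by rw [← mul_pow]; norm_num
      linear_combination ((-1:ℚ)^t * ℓ i) * hcc - (ℓ i * (n.choose i:ℚ) * ((n-i).choose t:ℚ)) * hh
    rw [Finset.sum_congr rfl inner, ← Finset.mul_sum, half_pow]
    have h2n : (2:ℚ)^i * (1/2)^(n-i) * 2^(n-i) = 2^i * 1 := by
      rw [mul_assoc, ← mul_pow]
      norm_num
    have hsplit : (2:ℚ)^n = 2^i * 2^(n-i) := by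
      rw [← pow_add]
      congr 1
      omega
    have h2i : (2:ℚ)^i ≠ 0 := by positivity
    have h2ni : (2:ℚ)^(n-i) ≠ 0 := by positivity
    rw [hsplit]
    field_simp
    have hh : (1/2:ℚ)^(n-i) * 2^(n-i) = 1 := by rw [← mul_pow]; norm_num
    linear_combination ((n.choose i:ℚ) * ℓ i) * hh
  -- T = 1 + (2/2^n) * S
  have hT : (∑ k ∈ Finset.range (n+1), (-1:ℚ)^k * (n.choose k : ℚ) * ℓ (k+1))
      = 1 + (2/2^n) * S := by
    rw [Finset.sum_range_succ' _ n]
    simp only [pow_zero, Nat.choose_zero_right, Nat.cast_one, one_mul, mul_one, h1]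
    have hsub : ∀ k ∈ Finset.range n,
        (-1:ℚ)^(k+1) * (n.choose (k+1):ℚ) * ℓ (k+1+1)
        = (-1:ℚ)^(k+1) * (n.choose (k+1):ℚ) *
            ((2/2^(k+1)) * ∑ i ∈ Finset.range (k+2), (((k+1).choose i:ℚ)) * ℓ i) := by
      intro k _
      rw [hrec (k+1) (by omega), two_zpow]
    rw [Finset.sum_congr rfl hsub]
    have hfull : (∑ k ∈ Finset.range (n+1),
          (-1:ℚ)^k * (n.choose k:ℚ) * ((2/2^k) * ∑ i ∈ Finset.range (k+1), ((k.choose i:ℚ)) * ℓ i))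
        = ∑ k ∈ Finset.range n,
            (-1:ℚ)^(k+1) * (n.choose (k+1):ℚ) *
              ((2/2^(k+1)) * ∑ i ∈ Finset.range (k+2), (((k+1).choose i:ℚ)) * ℓ i) := by
      rw [Finset.sum_range_succ' _ n]
      simp [h0]
    rw [← hfull, hD]
    ring
  -- assemble
  rw [Finset.sum_range_succ' _ (n+1), h0]
  simp only [mul_zero, add_zero]
  have hsplit2 : ∀ k ∈ Finset.range (n+1),
      (-1:ℚ)^(k+1) * ((n+1).choose (k+1):ℚ) * ℓ (k+1)
      = -((-1:ℚ)^k * (n.choose k:ℚ) * ℓ (k+1)) + -((-1:ℚ)^k * (n.choose (k+1):ℚ) * ℓ (k+1)) := by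
    intro k _
    rw [Nat.choose_succ_succ]
    push_cast
    rw [pow_succ]
    ring
  rw [Finset.sum_congr rfl hsplit2, Finset.sum_add_distrib, Finset.sum_neg_distrib,
    Finset.sum_neg_distrib, hT, hU]
  ring

/-- If `ℓ 0 = 0`, `ℓ 1 = 1`, and
`ℓ (n+1) = 2^{1-n} Σ_{k=0}^{n} C(n,k) ℓ k` for `n ≥ 1`, then the binomial (Poisson)
transform `ℓ̂ n = Σ_{k=0}^{n} (-1)^{n-k} C(n,k) ℓ k` satisfies, for every `n ≥ 2`,
`ℓ̂ n = (-1)^{n+1} Q_{n-2} (1/Q_0 + ⋯ + 1/Q_{n-2})`. -/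
theorem poisson_transform_endnodes
    (ℓ : ℕ → ℚ) (h0 : ℓ 0 = 0) (h1 : ℓ 1 = 1)
    (hrec : ∀ n : ℕ, 1 ≤ n →
      ℓ (n + 1) = (2 : ℚ) ^ ((1 : ℤ) - (n : ℤ)) *
        ∑ k ∈ Finset.range (n + 1), (n.choose k : ℚ) * ℓ k) :
    ∀ n : ℕ, 2 ≤ n →
      (∑ k ∈ Finset.range (n + 1), (-1 : ℚ) ^ (n - k) * (n.choose k : ℚ) * ℓ k) =
        (-1 : ℚ) ^ (n + 1) * Q (n - 2) * ∑ j ∈ Finset.range (n - 1), 1 / Q j := by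
  have hb : ∀ n : ℕ, (∑ k ∈ Finset.range (n + 1), (-1 : ℚ) ^ (n - k) * (n.choose k : ℚ) * ℓ k)
      = (-1:ℚ)^n * ∑ k ∈ Finset.range (n+1), (-1:ℚ)^k * (n.choose k : ℚ) * ℓ k := by
    intro n
    rw [Finset.mul_sum]
    refine Finset.sum_congr rfl fun k hk => ?_
    have hk' : k ≤ n := Nat.lt_succ_iff.mp (Finset.mem_range.mp hk)
    have key : ((-1:ℚ))^(n-k) * (-1)^k = (-1)^n := by
      rw [← pow_add, Nat.sub_add_cancel hk']
    have h2 : ((-1:ℚ))^(n-k) = (-1)^n * (-1)^k := by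
      rw [← key, mul_assoc, ← pow_add, ← two_mul, pow_mul]
      norm_num
    rw [h2]
    ring
  have main : ∀ n : ℕ, 2 ≤ n → (∑ k ∈ Finset.range (n+1), (-1:ℚ)^k * (n.choose k : ℚ) * ℓ k)
      = -(Q (n-2) * ∑ j ∈ Finset.range (n-1), 1/Q j) := by
    intro n hn
    induction n, hn using Nat.le_induction with
    | base =>
      have h2 : ℓ 2 = 1 := by
        have := hrec 1 le_rfl
        norm_num [Finset.sum_range_succ, h0, h1] at this
        exact this
      norm_num [Finset.sum_range_succ, h0, h1, h2, Q]
    | succ n hn ih =>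
      obtain ⟨m, rfl⟩ : ∃ m, n = m + 2 := ⟨n - 2, by omega⟩
      have hkey := Skey ℓ h0 h1 hrec (m+2) (by omega)
      have hQm : Q m ≠ 0 := ne_of_gt (Qpos m)
      have hf : (1 - 1/2^(m+1) : ℚ) ≠ 0 := by
        have h1' : (1:ℚ)/2^(m+1) < 1 := by
          rw [div_lt_one (by positivity)]
          exact one_lt_pow₀ (by norm_num) (by omega)
        linarith
      have hQs : Q (m+1) = Q m * (1 - 1/2^(m+1)) := Finset.prod_range_succ _ _
      have hsub1 : m + 2 + 1 - 2 = m + 1 := by omega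
      have hsub2 : m + 2 + 1 - 1 = m + 2 := by omega
      have hsub3 : m + 2 - 2 = m := by omega
      have hsub4 : m + 2 - 1 = m + 1 := by omega
      rw [hsub3, hsub4] at ih
      rw [hsub1, hsub2]
      have hsum : ∑ j ∈ Finset.range (m+2), 1/Q j
          = (∑ j ∈ Finset.range (m+1), 1/Q j) + 1/Q (m+1) := Finset.sum_range_succ _ _
      have h2p : (2:ℚ)/2^(m+2) = 1/2^(m+1) := by
        rw [pow_succ]
        ring
      have hQ1 : Q (m+1) * (1/Q (m+1)) = 1 := by
        field_simp [ne_of_gt (Qpos (m+1))]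
      rw [show m + 2 + 1 + 1 = m + 2 + 2 from rfl, hkey, ih, hsum, h2p]
      linear_combination (∑ j ∈ Finset.range (m+1), 1/Q j) * hQs + hQ1
  intro n hn
  rw [hb, main n hn, pow_succ]
  ring
end

section
/- Fix integers n ≥ 0 and k ≥ 1. Let μ be the product measure on (Fin n → ℕ) of n copies of the geometric distribution on ℕ assigning probability 2^{-(i+1)} to the value i. Then the probability that every urn 0, 1, …, k-1 is hit, i.e. μ({ x : Fin n → ℕ | ∀ i < k, ∃ m, x m = i }), equals Σ_{j=0}^{2^k - 1} (-1)^{ν(j)} (1 - j/2^k)^n, where ν(j) denotes the number of ones in the binary representation of j. -/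
open MeasureTheory

noncomputable def geomMeasure : Measure ℕ :=
  Measure.sum (fun i : ℕ => ((2 : ENNReal) ^ (i + 1))⁻¹ • Measure.dirac i)

lemma geom_apply (s : Set ℕ) :
    geomMeasure s = ∑' i, s.indicator (fun i => ((2:ENNReal)^(i+1))⁻¹) i := by
  rw [geomMeasure, Measure.sum_apply _ (by trivial)]
  congr 1; ext i
  rw [Measure.smul_apply, Measure.dirac_apply' _ (by trivial)]
  by_cases h : i ∈ s <;> simp [Set.indicator, h]

lemma geom_univ : geomMeasure Set.univ = 1 := by
  rw [geom_apply]
  simp only [Set.indicator_univ]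
  have : ∀ i : ℕ, ((2:ENNReal)^(i+1))⁻¹ = 2⁻¹ * (2⁻¹)^i := by
    intro i; rw [ENNReal.inv_pow, pow_succ, mul_comm]
  simp_rw [this]
  rw [ENNReal.tsum_mul_left, ENNReal.tsum_geometric]
  rw [ENNReal.one_sub_inv_two, inv_inv]
  exact ENNReal.inv_mul_cancel two_ne_zero ENNReal.ofNat_ne_top

instance : IsProbabilityMeasure geomMeasure := ⟨geom_univ⟩

lemma geom_coe (T : Finset ℕ) :
    geomMeasure ↑T = ∑ i ∈ T, ((2:ENNReal)^(i+1))⁻¹ := by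
  rw [geom_apply, tsum_eq_sum (s := T) (fun i hi => Set.indicator_of_notMem (by simpa using hi) _)]
  exact Finset.sum_congr rfl fun i hi => Set.indicator_of_mem (by simpa using hi) _
-- digits sum = bitIndices length
lemma digits_sum_eq (j : ℕ) : (Nat.digits 2 j).sum = j.bitIndices.length := by
  induction j using Nat.strong_induction_on with
  | _ j ih =>
    match j with
    | 0 => simp
    | (j+1) =>
      rcases Nat.even_or_odd (j+1) with ⟨m, hm⟩ | ⟨m, hm⟩
      · have hm' : j + 1 = 2 * m := by omega
        have hmpos : 0 < m := by omega
        rw [hm', Nat.digits_def' (by norm_num) (by omega), Nat.bitIndices_two_mul]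
        simp only [Nat.mul_mod_right, Nat.mul_div_cancel_left _ (by norm_num : 0 < 2),
          List.length_map, List.sum_cons]
        rw [ih m (by omega)]; omega
      · rw [hm, Nat.digits_def' (by norm_num) (by omega), Nat.bitIndices_two_mul_add_one]
        have h1 : (2 * m + 1) % 2 = 1 := by omega
        have h2 : (2 * m + 1) / 2 = m := by omega
        rw [h1, h2, List.sum_cons, List.length_cons, List.length_map, ih m (by omega)]
        omega

lemma sum_range_two_pow (k : ℕ) : ∑ i ∈ Finset.range k, 2 ^ i = 2 ^ k - 1 := by
  induction k with
  | zero => simp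
  | succ k ihk => rw [Finset.sum_range_succ, ihk]; have := Nat.one_le_two_pow (n := k); ring_nf; omega

lemma sum_two_pow_lt (k : ℕ) (T : Finset ℕ) (hT : T ⊆ Finset.range k) :
    ∑ i ∈ T, 2 ^ i < 2 ^ k := by
  calc ∑ i ∈ T, 2 ^ i ≤ ∑ i ∈ Finset.range k, 2 ^ i :=
        Finset.sum_le_sum_of_subset hT
    _ < 2 ^ k := by rw [sum_range_two_pow]; have := Nat.one_le_two_pow (n := k); omega

lemma prod_indicator_biInter {Ω : Type*} (A : ℕ → Set Ω) (T : Finset ℕ) (x : Ω) :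
    ∏ i ∈ T, (A i).indicator (1 : Ω → ℝ) x = (⋂ i ∈ T, A i).indicator 1 x := by
  by_cases h : x ∈ ⋂ i ∈ T, A i
  · rw [Set.indicator_of_mem h]
    simp only [Set.mem_iInter] at h
    rw [Finset.prod_eq_one fun i hi => by rw [Set.indicator_of_mem (h i hi)]; rfl]
    rfl
  · rw [Set.indicator_of_notMem h]
    simp only [Set.mem_iInter, not_forall] at h
    obtain ⟨i, hi, hx⟩ := h
    rw [Finset.prod_eq_zero hi (by rw [Set.indicator_of_notMem hx])]

lemma incl_excl {Ω : Type*} [MeasurableSpace Ω] (μ : Measure Ω) [IsProbabilityMeasure μ]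
    (A : ℕ → Set Ω) (hA : ∀ i, MeasurableSet (A i)) (k : ℕ) :
    (μ (⋂ i ∈ Finset.range k, (A i)ᶜ)).toReal =
      ∑ T ∈ (Finset.range k).powerset, (-1:ℝ)^T.card * (μ (⋂ i ∈ T, A i)).toReal := by
  have hB : ∀ T : Finset ℕ, MeasurableSet (⋂ i ∈ T, A i) :=
    fun T => MeasurableSet.biInter T.countable_toSet (fun i _ => hA i)
  have hE : MeasurableSet (⋂ i ∈ Finset.range k, (A i)ᶜ) :=
    MeasurableSet.biInter (Finset.range k).countable_toSet (fun i _ => (hA i).compl)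
  rw [← measureReal_def, ← integral_indicator_one hE]
  have key : ∀ x, (⋂ i ∈ Finset.range k, (A i)ᶜ).indicator (1 : Ω → ℝ) x
      = ∑ T ∈ (Finset.range k).powerset, (-1:ℝ)^T.card * (⋂ i ∈ T, A i).indicator 1 x := by
    intro x
    have step1 : (⋂ i ∈ Finset.range k, (A i)ᶜ).indicator (1 : Ω → ℝ) x
        = ∏ i ∈ Finset.range k, ((-(A i).indicator (1 : Ω → ℝ) x) + 1) := by
      by_cases h : x ∈ ⋂ i ∈ Finset.range k, (A i)ᶜ
      · rw [Set.indicator_of_mem h]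
        simp only [Set.mem_iInter, Set.mem_compl_iff] at h
        rw [Finset.prod_eq_one fun i hi => by
          rw [Set.indicator_of_notMem (h i hi)]; ring]
        rfl
      · rw [Set.indicator_of_notMem h]
        simp only [Set.mem_iInter, Set.mem_compl_iff, not_forall, not_not] at h
        obtain ⟨i, hi, hx⟩ := h
        rw [Finset.prod_eq_zero hi (by rw [Set.indicator_of_mem hx]; simp [Pi.one_apply])]
    rw [step1, Finset.prod_add]
    refine Finset.sum_congr rfl fun T hT => ?_
    rw [Finset.prod_const_one, mul_one, ← prod_indicator_biInter A T x]
    simp_rw [neg_eq_neg_one_mul ((A _).indicator (1 : Ω → ℝ) x)]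
    rw [Finset.prod_mul_distrib, Finset.prod_const]
  simp_rw [key]
  rw [integral_finset_sum]
  · refine Finset.sum_congr rfl fun T hT => ?_
    rw [MeasureTheory.integral_const_mul, integral_indicator_one (hB T), measureReal_def]
  · exact fun T _ => ((integrable_const (1:ℝ)).indicator (hB T)).const_mul _
-- Step A: reversal
lemma stepA (n k : ℕ) (hk : 1 ≤ k) :
    ∑ T ∈ (Finset.range k).powerset, (-1:ℝ)^T.card * (1 - ∑ i ∈ T, ((2:ℝ)^(i+1))⁻¹)^n
    = ∑ T ∈ (Finset.range k).powerset, (-1:ℝ)^T.card * (1 - (∑ i ∈ T, (2:ℝ)^i)/2^k)^n := by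
  have hg : ∀ a, a < k → k - 1 - a < k := fun a ha => by omega
  have hgg : ∀ a, a < k → k - 1 - (k - 1 - a) = a := fun a ha => by omega
  refine Finset.sum_nbij' (fun T => T.image (fun a => k - 1 - a))
    (fun T => T.image (fun a => k - 1 - a)) ?_ ?_ ?_ ?_ ?_
  case refine_1 =>
    intro T hT
    rw [Finset.mem_powerset] at hT ⊢
    intro a ha
    rw [Finset.mem_image] at ha
    obtain ⟨b, hb, rfl⟩ := ha
    exact Finset.mem_range.2 (hg b (Finset.mem_range.1 (hT hb)))
  case refine_2 =>
    intro T hT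
    rw [Finset.mem_powerset] at hT ⊢
    intro a ha
    rw [Finset.mem_image] at ha
    obtain ⟨b, hb, rfl⟩ := ha
    exact Finset.mem_range.2 (hg b (Finset.mem_range.1 (hT hb)))
  case refine_3 =>
    intro T hT
    rw [Finset.mem_powerset] at hT
    show (T.image (fun a => k - 1 - a)).image (fun a => k - 1 - a) = T
    rw [Finset.image_image]
    calc T.image ((fun a => k - 1 - a) ∘ (fun a => k - 1 - a))
        = T.image id := Finset.image_congr fun a ha =>
          hgg a (Finset.mem_range.1 (hT ha))
      _ = T := Finset.image_id
  case refine_4 =>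
    intro T hT
    rw [Finset.mem_powerset] at hT
    show (T.image (fun a => k - 1 - a)).image (fun a => k - 1 - a) = T
    rw [Finset.image_image]
    calc T.image ((fun a => k - 1 - a) ∘ (fun a => k - 1 - a))
        = T.image id := Finset.image_congr fun a ha =>
          hgg a (Finset.mem_range.1 (hT ha))
      _ = T := Finset.image_id
  case refine_5 =>
    intro T hT
    rw [Finset.mem_powerset] at hT
    have hinj : Set.InjOn (fun a => k - 1 - a) ↑T := by
      intro a ha b hb hab
      have ha' := Finset.mem_range.1 (hT ha)
      have hb' := Finset.mem_range.1 (hT hb)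
      simp only at hab
      omega
    have hsum : ∑ i ∈ T, ((2:ℝ)^(i+1))⁻¹ = (∑ i ∈ T, (2:ℝ)^(k-1-i))/2^k := by
      rw [Finset.sum_div]
      refine Finset.sum_congr rfl fun i hi => ?_
      have hik := Finset.mem_range.1 (hT hi)
      have h2 : (2:ℝ)^(k-1-i) * 2^(i+1) = 2^k := by
        rw [← pow_add]; congr 1; omega
      have h2' : (0:ℝ) < 2^(i+1) := by positivity
      have h2k : (0:ℝ) < 2^k := by positivity
      rw [eq_div_iff (ne_of_gt h2k), inv_mul_eq_div, div_eq_iff (ne_of_gt h2')]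
      linarith [h2]
    show _ = (-1:ℝ)^(T.image (fun a => k - 1 - a)).card *
      (1 - (∑ i ∈ T.image (fun a => k - 1 - a), (2:ℝ)^i)/2^k)^n
    rw [Finset.card_image_of_injOn hinj, Finset.sum_image hinj, hsum]

-- Step B: bijection to range (2^k)
lemma stepB (n k : ℕ) :
    ∑ T ∈ (Finset.range k).powerset, (-1:ℝ)^T.card * (1 - (∑ i ∈ T, (2:ℝ)^i)/2^k)^n
    = ∑ j ∈ Finset.range (2 ^ k),
        (-1 : ℝ) ^ ((Nat.digits 2 j).sum) * (1 - (j : ℝ) / 2 ^ k) ^ n := by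
  refine Finset.sum_nbij' (fun T => ∑ i ∈ T, 2 ^ i) (fun m => m.bitIndices.toFinset)
    ?_ ?_ ?_ ?_ ?_
  case refine_1 =>
    intro T hT
    rw [Finset.mem_powerset] at hT
    exact Finset.mem_range.2 (sum_two_pow_lt k T hT)
  case refine_2 =>
    intro m hm
    rw [Finset.mem_range] at hm
    rw [Finset.mem_powerset]
    intro a ha
    rw [List.mem_toFinset] at ha
    have := Nat.two_pow_le_of_mem_bitIndices ha
    exact Finset.mem_range.2 (by
      by_contra h
      push_neg at h
      exact absurd (le_trans (Nat.pow_le_pow_right (by norm_num) h) this) (by omega))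
  case refine_3 =>
    intro T _; exact Finset.toFinset_bitIndices_twoPowSum T
  case refine_4 =>
    intro m _; exact Finset.twoPowSum_toFinset_bitIndices m
  case refine_5 =>
    intro T hT
    have hcard : (Nat.digits 2 (∑ i ∈ T, 2 ^ i)).sum = T.card := by
      rw [digits_sum_eq, ← List.toFinset_card_of_nodup Nat.bitIndices_sorted.nodup,
        Finset.toFinset_bitIndices_twoPowSum]
    rw [hcard]
    congr 2
    push_cast
    rfl

lemma geom_compl_toReal (T : Finset ℕ) :
    (geomMeasure ((↑T : Set ℕ)ᶜ)).toReal = 1 - ∑ i ∈ T, ((2:ℝ)^(i+1))⁻¹ := by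
  have hle : geomMeasure ↑T ≤ 1 := prob_le_one
  rw [measure_compl (by trivial) (measure_ne_top _ _), measure_univ,
    ENNReal.toReal_sub_of_le hle ENNReal.one_ne_top, ENNReal.toReal_one]
  congr 1
  rw [geom_coe, ENNReal.toReal_sum (fun i _ =>
    ENNReal.inv_ne_top.2 (pow_ne_zero _ (by norm_num)))]
  refine Finset.sum_congr rfl fun i _ => ?_
  rw [ENNReal.toReal_inv]
  norm_num

/-- For `n ≥ 0` samples from the geometric distribution with
parameter 1/2 (independent, i.e. the product measure on `Fin n → ℕ`), and `k ≥ 1`,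
the probability that each value `0, 1, …, k-1` occurs at least once equals
`Σ_{j=0}^{2^k - 1} (-1)^{ν(j)} (1 - j/2^k)^n`, where `ν(j)` is the number of ones
in the binary representation of `j`. -/
theorem probabilistic_counting (n k : ℕ) (hk : 1 ≤ k) :
    ((Measure.pi (fun _ : Fin n => geomMeasure))
        {x : Fin n → ℕ | ∀ i < k, ∃ m : Fin n, x m = i}).toReal =
      ∑ j ∈ Finset.range (2 ^ k),
        (-1 : ℝ) ^ ((Nat.digits 2 j).sum) * (1 - (j : ℝ) / 2 ^ k) ^ n := by
  set μ := Measure.pi (fun _ : Fin n => geomMeasure) with hμ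
  set A : ℕ → Set (Fin n → ℕ) := fun i => {x | ∀ m, x m ≠ i} with hA_def
  have hA : ∀ i, MeasurableSet (A i) := by
    intro i
    have : A i = ⋂ m, (fun x : Fin n → ℕ => x m) ⁻¹' {i}ᶜ := by
      ext x; simp [hA_def]
    rw [this]
    exact MeasurableSet.iInter fun m => (measurable_pi_apply m) (by trivial)
  have hEeq : {x : Fin n → ℕ | ∀ i < k, ∃ m : Fin n, x m = i}
      = ⋂ i ∈ Finset.range k, (A i)ᶜ := by
    ext x
    simp only [Set.mem_setOf_eq, Set.mem_iInter, Set.mem_compl_iff, hA_def,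
      Finset.mem_range, not_forall, not_not]
  rw [hEeq, incl_excl μ A hA k]
  have hBT : ∀ T : Finset ℕ, (μ (⋂ i ∈ T, A i)).toReal
      = (1 - ∑ i ∈ T, ((2:ℝ)^(i+1))⁻¹)^n := by
    intro T
    have hpi : (⋂ i ∈ T, A i) = Set.pi Set.univ (fun _ : Fin n => (↑T : Set ℕ)ᶜ) := by
      ext x
      simp only [Set.mem_iInter, hA_def, Set.mem_setOf_eq, Set.mem_univ_pi,
        Set.mem_compl_iff, Finset.coe_sort_coe, Finset.mem_coe]
      constructor
      · intro h m hm; exact h (x m) hm m rfl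
      · intro h i hi m hx; exact h m (by rw [hx]; exact hi)
    rw [hpi, hμ, Measure.pi_pi, Finset.prod_const, Finset.card_univ, Fintype.card_fin,
      ENNReal.toReal_pow, geom_compl_toReal]
  simp_rw [hBT]
  rw [stepA n k hk, stepB n k]
end

section
/- For every real number q with 0 ≤ q < 1, the infinite product ∏_{j=0}^{∞} (1 - q^{2^j}) converges and equals the convergent series Σ_{j=0}^{∞} (-1)^{ν(j)} q^j, where ν(j) denotes the number of ones in the binary representation of j. -/
-- digit sum recursion
lemma bitsum_rec (j : ℕ) :
    (Nat.digits 2 j).sum = j % 2 + (Nat.digits 2 (j / 2)).sum := by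
  rcases Nat.eq_zero_or_pos j with h | h
  · simp [h]
  · rw [Nat.digits_def' (by norm_num) h]; simp

lemma bitsum_add_pow (n : ℕ) : ∀ j < 2 ^ n,
    (Nat.digits 2 (2 ^ n + j)).sum = (Nat.digits 2 j).sum + 1 := by
  induction n with
  | zero => intro j hj; interval_cases j; simp
  | succ n ih =>
    intro j hj
    have h2 : (2 ^ (n + 1) + j) % 2 = j % 2 := by
      omega
    have h3 : (2 ^ (n + 1) + j) / 2 = 2 ^ n + j / 2 := by
      omega
    rw [bitsum_rec (2 ^ (n+1) + j), h2, h3, ih (j / 2) (by omega), bitsum_rec j]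
    ring

lemma key_prod (q : ℝ) (n : ℕ) :
    ∏ i ∈ Finset.range n, (1 - q ^ (2 ^ i)) =
      ∑ j ∈ Finset.range (2 ^ n), (-1 : ℝ) ^ ((Nat.digits 2 j).sum) * q ^ j := by
  induction n with
  | zero => simp
  | succ n ih =>
    rw [Finset.prod_range_succ, ih, pow_succ, mul_two,
      Finset.sum_range_add]
    have : ∀ j ∈ Finset.range (2 ^ n),
        (-1 : ℝ) ^ ((Nat.digits 2 (2 ^ n + j)).sum) * q ^ (2 ^ n + j)
          = -(q ^ (2 ^ n) * ((-1 : ℝ) ^ ((Nat.digits 2 j).sum) * q ^ j)) := by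
      intro j hj
      rw [bitsum_add_pow n j (Finset.mem_range.mp hj), pow_add, pow_succ]
      ring
    rw [Finset.sum_congr rfl this, Finset.sum_neg_distrib, ← Finset.mul_sum]
    ring

/-- For every real `q` with `0 ≤ q < 1`, the infinite product
`∏_{j≥0} (1 - q^{2^j})` converges and equals the convergent series
`Σ_{j≥0} (-1)^{ν(j)} q^j`, where `ν(j)` is the number of ones in the binary
representation of `j` (Prouhet–Thue–Morse). -/
theorem thue_morse_product (q : ℝ) (hq0 : 0 ≤ q) (hq1 : q < 1) :
    Multipliable (fun j : ℕ => 1 - q ^ (2 ^ j)) ∧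
    Summable (fun j : ℕ => (-1 : ℝ) ^ ((Nat.digits 2 j).sum) * q ^ j) ∧
    (∏' j : ℕ, (1 - q ^ (2 ^ j))) =
      ∑' j : ℕ, (-1 : ℝ) ^ ((Nat.digits 2 j).sum) * q ^ j := by
  set f : ℕ → ℝ := fun j => 1 - q ^ (2 ^ j) with hf
  have hfpos : ∀ j, 0 < f j := by
    intro j
    have h1 : q ^ (2 ^ j) < 1 := by
      calc q ^ (2 ^ j) ≤ q ^ 1 := pow_le_pow_of_le_one hq0 hq1.le (Nat.one_le_two_pow)
        _ = q := pow_one q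
        _ < 1 := hq1
    simp [hf]; linarith
  have hfle : ∀ j, f j ≤ 1 := by
    intro j
    have : 0 ≤ q ^ (2 ^ j) := pow_nonneg hq0 _
    simp [hf]; linarith
  -- Multipliable
  have hanti : Antitone (fun s : Finset ℕ => ∏ i ∈ s, f i) := by
    intro s t hst
    simp only []
    rw [← Finset.prod_sdiff hst]
    calc (∏ i ∈ t \ s, f i) * ∏ i ∈ s, f i
        ≤ 1 * ∏ i ∈ s, f i := by
          apply mul_le_mul_of_nonneg_right
          · exact Finset.prod_le_one (fun i _ => (hfpos i).le) (fun i _ => hfle i)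
          · exact Finset.prod_nonneg fun i _ => (hfpos i).le
      _ = ∏ i ∈ s, f i := one_mul _
  have hbdd : BddBelow (Set.range fun s : Finset ℕ => ∏ i ∈ s, f i) := by
    refine ⟨0, ?_⟩
    rintro x ⟨s, rfl⟩
    exact Finset.prod_nonneg fun i _ => (hfpos i).le
  have hm : Multipliable f :=
    ⟨_, tendsto_atTop_ciInf hanti hbdd⟩
  -- Summable
  have hs : Summable (fun j : ℕ => (-1 : ℝ) ^ ((Nat.digits 2 j).sum) * q ^ j) := by
    apply Summable.of_norm_bounded (g := fun j => q ^ j)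
      (summable_geometric_of_lt_one hq0 hq1)
    intro j
    rw [norm_mul, norm_pow, norm_neg, norm_one, one_pow, one_mul, norm_pow,
      Real.norm_of_nonneg hq0]
  refine ⟨hm, hs, ?_⟩
  -- Equality
  have h1 : Filter.Tendsto (fun n => ∏ i ∈ Finset.range n, f i) Filter.atTop
      (nhds (∏' j, f j)) := hm.hasProd.tendsto_prod_nat
  have h2 : Filter.Tendsto
      (fun n => ∑ j ∈ Finset.range (2 ^ n), (-1 : ℝ) ^ ((Nat.digits 2 j).sum) * q ^ j)
      Filter.atTop (nhds (∑' j, (-1 : ℝ) ^ ((Nat.digits 2 j).sum) * q ^ j)) :=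
    hs.hasSum.tendsto_sum_nat.comp (tendsto_pow_atTop_atTop_of_one_lt one_lt_two)
  have heq : (fun n => ∏ i ∈ Finset.range n, f i) =
      fun n => ∑ j ∈ Finset.range (2 ^ n), (-1 : ℝ) ^ ((Nat.digits 2 j).sum) * q ^ j := by
    funext n; exact key_prod q n
  rw [heq] at h1
  exact tendsto_nhds_unique h1 h2
end

section
/- For every integer n ≥ 1, the following identity of formal power series over ℚ holds: Σ_{m=0}^{∞} ( Σ_{k=1}^{n} C(n,k) (-1)^{k-1} / k^m ) z^m = exp( Σ_{j=1}^{∞} (H_n^{(j)}/j) z^j ), where exp applied to a formal power series g with zero constant term means substituting g into the exponential series Σ_{r≥0} z^r/r!. -/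
open PowerSeries Finset

/-- The formal power series `Σ_{j≥1} (H_n^{(j)}/j) z^j` over `ℚ`, where
`H_n^{(j)} = Σ_{k=1}^{n} 1/k^j` is the generalized harmonic number. -/
noncomputable def harmonicLogSeries (n : ℕ) : PowerSeries ℚ :=
  PowerSeries.mk fun j =>
    if j = 0 then 0 else (∑ k ∈ Finset.Icc 1 n, (1 : ℚ) / (k : ℚ) ^ j) / j


/-- The geometric series `Σ r^m z^m`. -/
noncomputable def geomSer (r : ℚ) : PowerSeries ℚ := PowerSeries.mk fun m => r ^ m

lemma geomSer_mul_one_sub (r : ℚ) :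
    geomSer r * (1 - PowerSeries.C r * X) = 1 := by
  ext m
  rw [mul_sub, mul_one, map_sub, show PowerSeries.C r * X = X * PowerSeries.C r from
    mul_comm _ _, ← mul_assoc, PowerSeries.coeff_mul_C]
  cases m with
  | zero => simp [geomSer]
  | succ k => simp [geomSer, PowerSeries.coeff_succ_mul_X, pow_succ, mul_comm]

lemma const_sum (n : ℕ) (hn : 1 ≤ n) :
    ∑ k ∈ Finset.Icc 1 n, (n.choose k : ℚ) * (-1 : ℚ) ^ (k - 1) = 1 := by
  have h := Int.alternating_sum_range_choose_of_ne (n := n) (by omega)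
  have h2 : (∑ i ∈ Finset.range (n + 1), (-1 : ℚ) ^ i * (n.choose i : ℚ)) = 0 := by
    exact_mod_cast congrArg (fun z : ℤ => (z : ℚ)) h
  have hins : Finset.range (n + 1) = insert 0 (Finset.Icc 1 n) := by
    ext x; simp; omega
  rw [hins, Finset.sum_insert (by simp)] at h2
  simp only [pow_zero, one_mul, Nat.choose_zero_right, Nat.cast_one] at h2
  have : ∑ k ∈ Finset.Icc 1 n, (-1 : ℚ) ^ k * (n.choose k : ℚ) = -1 := by linarith
  calc ∑ k ∈ Finset.Icc 1 n, (n.choose k : ℚ) * (-1 : ℚ) ^ (k - 1)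
      = ∑ k ∈ Finset.Icc 1 n, -((-1 : ℚ) ^ k * (n.choose k : ℚ)) := by
        apply Finset.sum_congr rfl
        intro k hk
        simp only [Finset.mem_Icc] at hk
        obtain ⟨j, rfl⟩ : ∃ j, k = j + 1 := ⟨k - 1, by omega⟩
        simp [pow_succ]
        ring
    _ = 1 := by rw [Finset.sum_neg_distrib]; rw [this]; norm_num
noncomputable def Lser (n : ℕ) : PowerSeries ℚ :=
  PowerSeries.mk
    (fun m => ∑ k ∈ Finset.Icc 1 n, (n.choose k : ℚ) * (-1 : ℚ) ^ (k - 1) / (k : ℚ) ^ m)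

lemma coeff_mul_one_sub (f : PowerSeries ℚ) (r : ℚ) (m : ℕ) :
    PowerSeries.coeff (m + 1) (f * (1 - PowerSeries.C r * X)) =
      PowerSeries.coeff (m + 1) f - r * PowerSeries.coeff m f := by
  rw [mul_sub, mul_one, map_sub, show PowerSeries.C r * X = X * PowerSeries.C r from
    mul_comm _ _, ← mul_assoc, PowerSeries.coeff_mul_C, PowerSeries.coeff_succ_mul_X]
  ring

lemma Lser_succ_mul (n : ℕ) (hn : 1 ≤ n) :
    Lser (n + 1) * (1 - PowerSeries.C (1 / (n + 1 : ℚ)) * X) = Lser n := by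
  ext m
  cases m with
  | zero =>
      rw [PowerSeries.coeff_zero_eq_constantCoeff, map_mul, map_sub]
      simp only [map_one, map_mul, PowerSeries.constantCoeff_C, PowerSeries.constantCoeff_X,
        mul_zero, sub_zero, mul_one]
      simp only [Lser, PowerSeries.coeff_mk, pow_zero, div_one,
        ← PowerSeries.coeff_zero_eq_constantCoeff]
      rw [const_sum (n+1) (by omega), const_sum n hn]
  | succ m =>
      rw [coeff_mul_one_sub]
      simp only [Lser, PowerSeries.coeff_mk]
      rw [Finset.mul_sum, ← Finset.sum_sub_distrib]
      rw [Finset.sum_Icc_succ_top (by omega : 1 ≤ n + 1)]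
      have hlast : ((n + 1).choose (n + 1) : ℚ) * (-1 : ℚ) ^ (n + 1 - 1) / ((n + 1 : ℕ) : ℚ) ^ (m + 1)
          - 1 / ((n : ℚ) + 1) * (((n + 1).choose (n + 1) : ℚ) * (-1 : ℚ) ^ (n + 1 - 1) / ((n + 1 : ℕ) : ℚ) ^ m) = 0 := by
        have h1 : ((n : ℚ) + 1) ≠ 0 := by positivity
        simp only [Nat.choose_self, Nat.cast_one, one_mul, Nat.cast_add, Nat.cast_one]
        field_simp
        ring
      rw [hlast, add_zero]
      apply Finset.sum_congr rfl
      intro k hk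
      simp only [Finset.mem_Icc] at hk
      have hk0 : (k : ℚ) ≠ 0 := Nat.cast_ne_zero.mpr (by omega)
      have hn1 : ((n : ℚ) + 1) ≠ 0 := by positivity
      have hch : ((n.choose k : ℚ)) * ((n : ℚ) + 1) = ((n + 1).choose k : ℚ) * ((n : ℚ) + 1 - k) := by
        have h2 : ((n.choose k * (n + 1) : ℕ) : ℚ) = (((n + 1).choose k * (n + 1 - k) : ℕ) : ℚ) := by
          exact_mod_cast congrArg (fun z : ℕ => (z : ℚ)) (Nat.choose_mul_succ_eq n k)
        push_cast [Nat.cast_sub (by omega : k ≤ n + 1)] at h2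
        linear_combination h2
      field_simp
      linear_combination (-(k:ℚ)^m) * hch
lemma Lser_eq_prod (n : ℕ) (hn : 1 ≤ n) :
    Lser n = ∏ k ∈ Finset.Icc 1 n, geomSer (1 / (k : ℚ)) := by
  induction n, hn using Nat.le_induction with
  | base =>
      rw [Finset.Icc_self, Finset.prod_singleton]
      ext m
      simp [Lser, geomSer]
  | succ n hn ih =>
      have hunit : (1 - PowerSeries.C (1 / ((n : ℚ) + 1)) * X) * geomSer (1 / ((n : ℚ) + 1)) = 1 := by
        rw [mul_comm]; exact geomSer_mul_one_sub _
      have key : Lser (n + 1) * (1 - PowerSeries.C (1 / ((n : ℚ) + 1)) * X) =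
          (∏ k ∈ Finset.Icc 1 (n + 1), geomSer (1 / (k : ℚ))) *
            (1 - PowerSeries.C (1 / ((n : ℚ) + 1)) * X) := by
        rw [Lser_succ_mul n hn, ih, Finset.prod_Icc_succ_top (by omega : 1 ≤ n + 1)]
        rw [mul_assoc]
        have : ((n + 1 : ℕ) : ℚ) = (n : ℚ) + 1 := by push_cast; ring
        rw [this, geomSer_mul_one_sub, mul_one]
      have := congrArg (fun f => f * geomSer (1 / ((n : ℚ) + 1))) key
      simpa only [mul_assoc, hunit, mul_one] using this
lemma deriv_geomSer (r : ℚ) :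
    d⁄dX ℚ (geomSer r) = PowerSeries.C r * geomSer r ^ 2 := by
  ext m
  rw [PowerSeries.coeff_derivative, PowerSeries.coeff_C_mul, sq, PowerSeries.coeff_mul]
  simp only [geomSer, PowerSeries.coeff_mk]
  have h : ∀ p ∈ Finset.HasAntidiagonal.antidiagonal m, r ^ p.1 * r ^ p.2 = r ^ m := by
    intro p hp
    rw [← pow_add, Finset.HasAntidiagonal.mem_antidiagonal.mp hp]
  rw [Finset.sum_congr rfl h, Finset.sum_const, Finset.Nat.card_antidiagonal, nsmul_eq_mul]
  push_cast
  ring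

lemma deriv_harmonic (n : ℕ) :
    d⁄dX ℚ (harmonicLogSeries n) =
      ∑ k ∈ Finset.Icc 1 n, PowerSeries.C (1 / (k : ℚ)) * geomSer (1 / (k : ℚ)) := by
  ext m
  rw [PowerSeries.coeff_derivative, map_sum]
  simp only [PowerSeries.coeff_C_mul, harmonicLogSeries, geomSer, PowerSeries.coeff_mk,
    Nat.succ_ne_zero, if_false]
  have hm : ((m : ℚ) + 1) ≠ 0 := by positivity
  rw [show ((m + 1 : ℕ) : ℚ) = (m : ℚ) + 1 from by push_cast; ring, div_mul_cancel₀ _ hm]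
  apply Finset.sum_congr rfl
  intro k _
  rw [one_div_pow, div_mul_div_comm, one_mul, ← pow_succ']

lemma deriv_prod (s : Finset ℕ) :
    d⁄dX ℚ (∏ k ∈ s, geomSer (1 / (k : ℚ))) =
      (∑ k ∈ s, PowerSeries.C (1 / (k : ℚ)) * geomSer (1 / (k : ℚ))) *
        ∏ k ∈ s, geomSer (1 / (k : ℚ)) := by
  induction s using Finset.induction with
  | empty => simp
  | insert _ _ ha ih =>
      rw [Finset.prod_insert ha, Finset.sum_insert ha, Derivation.leibniz, smul_eq_mul,
        smul_eq_mul, ih, deriv_geomSer]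
      ring
noncomputable def Eexp (g : PowerSeries ℚ) : PowerSeries ℚ :=
  PowerSeries.mk
    (fun m => ∑ r ∈ Finset.range (m + 1),
      PowerSeries.coeff m (g ^ r) / (r.factorial : ℚ))

lemma coeff_pow_eq_zero {g : PowerSeries ℚ} (hg : PowerSeries.constantCoeff g = 0)
    {m r : ℕ} (h : m < r) : PowerSeries.coeff m (g ^ r) = 0 := by
  have hdvd : (X : PowerSeries ℚ) ^ r ∣ g ^ r :=
    pow_dvd_pow_of_dvd (PowerSeries.X_dvd_iff.mpr hg) r
  exact (PowerSeries.X_pow_dvd_iff.mp hdvd) m h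

lemma coeff_Eexp_le (g : PowerSeries ℚ) (hg : PowerSeries.constantCoeff g = 0)
    {m M : ℕ} (h : m ≤ M) :
    PowerSeries.coeff m (Eexp g) =
      ∑ r ∈ Finset.range (M + 1), PowerSeries.coeff m (g ^ r) / (r.factorial : ℚ) := by
  simp only [Eexp, PowerSeries.coeff_mk]
  apply Finset.sum_subset (Finset.range_subset_range.mpr (by omega))
  intro r hr hnr
  simp only [Finset.mem_range] at hr hnr
  rw [coeff_pow_eq_zero hg (by omega), zero_div]

lemma deriv_Eexp (g : PowerSeries ℚ) (hg : PowerSeries.constantCoeff g = 0) :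
    d⁄dX ℚ (Eexp g) = d⁄dX ℚ g * Eexp g := by
  ext m
  rw [PowerSeries.coeff_derivative, PowerSeries.coeff_mul]
  have hL : PowerSeries.coeff (m + 1) (Eexp g) =
      ∑ r ∈ Finset.range (m + 2), PowerSeries.coeff (m + 1) (g ^ r) / (r.factorial : ℚ) := by
    simp [Eexp]
  rw [hL, Finset.sum_mul, Finset.sum_range_succ']
  have h0 : PowerSeries.coeff (m + 1) (g ^ 0) / ((Nat.factorial 0 : ℕ) : ℚ) * ((m : ℚ) + 1)
      = 0 := by simp
  rw [h0, add_zero]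
  have hterm : ∀ i ∈ Finset.range (m + 1),
      PowerSeries.coeff (m + 1) (g ^ (i + 1)) / (((i + 1).factorial : ℕ) : ℚ) * ((m : ℚ) + 1)
        = PowerSeries.coeff m (d⁄dX ℚ g * g ^ i) / ((i.factorial : ℕ) : ℚ) := by
    intro i _
    have hD : PowerSeries.coeff (m + 1) (g ^ (i + 1)) * ((m : ℚ) + 1)
        = ((i : ℚ) + 1) * PowerSeries.coeff m (d⁄dX ℚ g * g ^ i) := by
      rw [← PowerSeries.coeff_derivative, Derivation.leibniz_pow, Nat.add_sub_cancel,
        smul_eq_mul, mul_comm (g ^ i), map_nsmul, nsmul_eq_mul]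
      push_cast
      ring
    have hfac : (((i + 1).factorial : ℕ) : ℚ) = ((i : ℚ) + 1) * ((i.factorial : ℕ) : ℚ) := by
      rw [Nat.factorial_succ]; push_cast; ring
    have hifac : ((i.factorial : ℕ) : ℚ) ≠ 0 := Nat.cast_ne_zero.mpr i.factorial_ne_zero
    have hi1 : ((i : ℚ) + 1) ≠ 0 := by positivity
    rw [hfac]
    field_simp
    linear_combination hD
  rw [Finset.sum_congr rfl hterm]
  have hR : ∀ p ∈ Finset.HasAntidiagonal.antidiagonal m,
      PowerSeries.coeff p.1 (d⁄dX ℚ g) * PowerSeries.coeff p.2 (Eexp g)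
        = ∑ r ∈ Finset.range (m + 1),
            PowerSeries.coeff p.1 (d⁄dX ℚ g) * (PowerSeries.coeff p.2 (g ^ r) / (r.factorial : ℚ)) := by
    intro p hp
    have hp2 : p.2 ≤ m := by
      have := Finset.HasAntidiagonal.mem_antidiagonal.mp hp; omega
    rw [coeff_Eexp_le g hg hp2, Finset.mul_sum]
  rw [Finset.sum_congr rfl hR, Finset.sum_comm]
  apply Finset.sum_congr rfl
  intro r _
  rw [PowerSeries.coeff_mul, Finset.sum_div]
  apply Finset.sum_congr rfl
  intro p _
  ring

lemma ode_unique (g F K : PowerSeries ℚ)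
    (hF : d⁄dX ℚ F = d⁄dX ℚ g * F) (hK : d⁄dX ℚ K = d⁄dX ℚ g * K)
    (h0 : PowerSeries.coeff 0 F = PowerSeries.coeff 0 K) : F = K := by
  ext m
  induction m using Nat.strong_induction_on with
  | _ m ih =>
    match m with
    | 0 => exact h0
    | j + 1 =>
      have hF' := congrArg (PowerSeries.coeff j) hF
      have hK' := congrArg (PowerSeries.coeff j) hK
      rw [PowerSeries.coeff_derivative, PowerSeries.coeff_mul] at hF' hK'
      have hsum : ∑ p ∈ Finset.HasAntidiagonal.antidiagonal j,
            PowerSeries.coeff p.1 (d⁄dX ℚ g) * PowerSeries.coeff p.2 F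
          = ∑ p ∈ Finset.HasAntidiagonal.antidiagonal j,
            PowerSeries.coeff p.1 (d⁄dX ℚ g) * PowerSeries.coeff p.2 K := by
        apply Finset.sum_congr rfl
        intro p hp
        have hp2 : p.2 < j + 1 := by
          have := Finset.HasAntidiagonal.mem_antidiagonal.mp hp; omega
        rw [ih p.2 hp2]
      have hj : ((j : ℚ) + 1) ≠ 0 := by positivity
      exact mul_right_cancel₀ hj (hF'.trans (hsum.trans hK'.symm))

/-- For every `n ≥ 1`, as formal power series over `ℚ`,
`Σ_{m≥0} (Σ_{k=1}^{n} C(n,k) (-1)^{k-1} / k^m) z^m = exp(Σ_{j≥1} (H_n^{(j)}/j) z^j)`,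
where the exponential of a power series `g` with zero constant term is obtained by
substituting `g` into `Σ_{r≥0} z^r/r!`; since `g` has zero constant term, the `m`-th
coefficient of the substitution is the finite sum `Σ_{r=0}^{m} coeff_m(g^r)/r!`. -/
theorem alternating_binomial_sum_exp (n : ℕ) (hn : 1 ≤ n) :
    PowerSeries.mk
        (fun m => ∑ k ∈ Finset.Icc 1 n, (n.choose k : ℚ) * (-1 : ℚ) ^ (k - 1) / (k : ℚ) ^ m) =
      PowerSeries.mk
        (fun m => ∑ r ∈ Finset.range (m + 1),
          PowerSeries.coeff m ((harmonicLogSeries n) ^ r) / (r.factorial : ℚ)) := by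
  have hg0 : PowerSeries.constantCoeff (harmonicLogSeries n) = 0 := by
    rw [← PowerSeries.coeff_zero_eq_constantCoeff]
    simp [harmonicLogSeries]
  show Lser n = Eexp (harmonicLogSeries n)
  apply ode_unique (harmonicLogSeries n)
  · rw [Lser_eq_prod n hn, deriv_prod, deriv_harmonic]
  · exact deriv_Eexp _ hg0
  · have h1 : PowerSeries.coeff 0 (Lser n) = 1 := by
      simp only [Lser, PowerSeries.coeff_mk, pow_zero, div_one]
      exact const_sum n hn
    have h2 : PowerSeries.coeff 0 (Eexp (harmonicLogSeries n)) = 1 := by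
      simp [Eexp]
    rw [h1, h2]
end

section
/- For every integer n ≥ 1, Σ_{k=1}^{n} C(n,k) (-1)^{k-1} / k^2 = (H_n)^2/2 + H_n^{(2)}/2, where H_n = Σ_{k=1}^{n} 1/k and H_n^{(2)} = Σ_{k=1}^{n} 1/k^2. -/
open Finset

private lemma range_succ_eq_insert (n : ℕ) : Finset.range (n+1) = insert 0 (Finset.Icc 1 n) := by
  ext x; simp [Finset.mem_range, Finset.mem_Icc]; omega

private lemma alt_choose_sum (n : ℕ) (hn : 1 ≤ n) :
    ∑ k ∈ Finset.Icc 1 n, ((-1:ℚ))^(k-1) * n.choose k = 1 := by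
  have h := Int.alternating_sum_range_choose (n := n)
  rw [if_neg (by omega)] at h
  have h' : ((∑ m ∈ Finset.range (n+1), (-1:ℤ)^m * n.choose m : ℤ) : ℚ) = 0 := by
    rw [h]; norm_num
  push_cast at h'
  rw [range_succ_eq_insert, Finset.sum_insert (by simp)] at h'
  simp only [pow_zero, one_mul, Nat.choose_zero_right, Nat.cast_one] at h'
  have : ∑ k ∈ Finset.Icc 1 n, ((-1:ℚ))^(k-1) * n.choose k
      = - ∑ k ∈ Finset.Icc 1 n, ((-1:ℚ))^k * n.choose k := by
    rw [← Finset.sum_neg_distrib]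
    apply Finset.sum_congr rfl
    intro k hk
    simp only [Finset.mem_Icc] at hk
    obtain ⟨m, rfl⟩ : ∃ m, k = m + 1 := ⟨k - 1, by omega⟩
    simp only [Nat.add_sub_cancel, pow_succ]
    ring
  rw [this]; linarith

private lemma choose_div_eq (n k : ℕ) (hk : 1 ≤ k) :
    (n.choose (k-1) : ℚ) / k = ((n+1).choose k : ℚ) / (n+1) := by
  obtain ⟨m, rfl⟩ : ∃ m, k = m + 1 := ⟨k - 1, by omega⟩
  have h := Nat.add_one_mul_choose_eq n m
  have h' : ((n+1 : ℕ) : ℚ) * n.choose m = (n+1).choose (m+1) * (m+1) := by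
    exact_mod_cast congrArg (Nat.cast : ℕ → ℚ) h
  have hn : ((n:ℚ)+1) ≠ 0 := by positivity
  have hm : ((m:ℚ)+1) ≠ 0 := by positivity
  field_simp
  push_cast at h' ⊢
  linarith

private lemma pascal_cast (n k : ℕ) (hk : 1 ≤ k) :
    ((n+1).choose k : ℚ) = n.choose k + n.choose (k-1) := by
  obtain ⟨m, rfl⟩ : ∃ m, k = m + 1 := ⟨k - 1, by omega⟩
  rw [Nat.choose_succ_succ]
  push_cast; ring

private lemma shift_sum (n : ℕ) (p : ℕ) :
    ∑ k ∈ Finset.Icc 1 (n+1), (n.choose (k-1) : ℚ) * (-1)^(k-1) / k^(p+1)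
      = (1/(n+1)) * ∑ k ∈ Finset.Icc 1 (n+1), ((n+1).choose k : ℚ) * (-1)^(k-1) / k^p := by
  rw [Finset.mul_sum]
  apply Finset.sum_congr rfl
  intro k hk
  simp only [Finset.mem_Icc] at hk
  have key := choose_div_eq n k hk.1
  rw [pow_succ]
  have step : (n.choose (k-1) : ℚ) * (-1)^(k-1) / ((k:ℚ)^p * k)
      = ((n.choose (k-1):ℚ)/k) * ((-1)^(k-1)/(k:ℚ)^p) := by ring
  rw [step, key]
  ring

private lemma drop_top (n : ℕ) (p : ℕ) :
    ∑ k ∈ Finset.Icc 1 (n+1), (n.choose k : ℚ) * (-1)^(k-1) / k^p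
      = ∑ k ∈ Finset.Icc 1 n, (n.choose k : ℚ) * (-1)^(k-1) / k^p := by
  rw [Finset.sum_Icc_succ_top (by omega)]
  simp [Nat.choose_eq_zero_of_lt (by omega : n < n+1)]

private lemma split_sum (n : ℕ) (p : ℕ) :
    ∑ k ∈ Finset.Icc 1 (n+1), ((n+1).choose k : ℚ) * (-1)^(k-1) / k^p
      = (∑ k ∈ Finset.Icc 1 n, (n.choose k : ℚ) * (-1)^(k-1) / k^p)
        + ∑ k ∈ Finset.Icc 1 (n+1), (n.choose (k-1) : ℚ) * (-1)^(k-1) / k^p := by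
  rw [← drop_top n p, ← Finset.sum_add_distrib]
  apply Finset.sum_congr rfl
  intro k hk
  simp only [Finset.mem_Icc] at hk
  rw [pascal_cast n k hk.1]
  ring

private lemma harmonic_id (n : ℕ) (hn : 1 ≤ n) :
    ∑ k ∈ Finset.Icc 1 n, (n.choose k : ℚ) * (-1)^(k-1) / k
      = ∑ k ∈ Finset.Icc 1 n, (1:ℚ)/k := by
  induction n, hn using Nat.le_induction with
  | base => simp
  | succ n hn ih =>
    have h1 : ∀ k : ℕ, ((n+1).choose k : ℚ) * (-1)^(k-1) / k
        = ((n+1).choose k : ℚ) * (-1)^(k-1) / (k:ℚ)^1 := by intro k; rw [pow_one]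
    calc ∑ k ∈ Finset.Icc 1 (n+1), ((n+1).choose k : ℚ) * (-1)^(k-1) / k
        = ∑ k ∈ Finset.Icc 1 (n+1), ((n+1).choose k : ℚ) * (-1)^(k-1) / (k:ℚ)^1 := by
          exact Finset.sum_congr rfl fun k _ => h1 k
      _ = (∑ k ∈ Finset.Icc 1 n, (n.choose k : ℚ) * (-1)^(k-1) / (k:ℚ)^1)
            + ∑ k ∈ Finset.Icc 1 (n+1), (n.choose (k-1) : ℚ) * (-1)^(k-1) / (k:ℚ)^1 := split_sum n 1
      _ = (∑ k ∈ Finset.Icc 1 n, (1:ℚ)/k) + 1/(n+1) := by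
          congr 1
          · rw [← ih]; exact Finset.sum_congr rfl fun k _ => by rw [pow_one]
          · rw [shift_sum n 0]
            have : ∑ k ∈ Finset.Icc 1 (n+1), ((n+1).choose k : ℚ) * (-1)^(k-1) / (k:ℚ)^0 = 1 := by
              have h2 := alt_choose_sum (n+1) (by omega)
              calc ∑ k ∈ Finset.Icc 1 (n+1), ((n+1).choose k : ℚ) * (-1)^(k-1) / (k:ℚ)^0
                  = ∑ k ∈ Finset.Icc 1 (n+1), ((-1:ℚ))^(k-1) * ((n+1).choose k) :=
                    Finset.sum_congr rfl fun k _ => by rw [pow_zero, div_one, mul_comm]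
                _ = 1 := h2
            rw [this]; ring
      _ = ∑ k ∈ Finset.Icc 1 (n+1), (1:ℚ)/k := by
          rw [Finset.sum_Icc_succ_top (by omega : 1 ≤ n+1)]
          push_cast; ring

/-- For every `n ≥ 1`,
`Σ_{k=1}^{n} C(n,k) (-1)^{k-1} / k² = H_n²/2 + H_n^{(2)}/2`. -/
theorem alternating_binomial_sum_two (n : ℕ) (hn : 1 ≤ n) :
    (∑ k ∈ Finset.Icc 1 n, (n.choose k : ℚ) * (-1 : ℚ) ^ (k - 1) / (k : ℚ) ^ 2) =
      (∑ k ∈ Finset.Icc 1 n, (1 : ℚ) / k) ^ 2 / 2 +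
        (∑ k ∈ Finset.Icc 1 n, (1 : ℚ) / (k : ℚ) ^ 2) / 2 := by
  induction n, hn using Nat.le_induction with
  | base => norm_num
  | succ n hn ih =>
    have hH : ∑ k ∈ Finset.Icc 1 (n+1), (1:ℚ)/k
        = (∑ k ∈ Finset.Icc 1 n, (1:ℚ)/k) + 1/(n+1) := by
      rw [Finset.sum_Icc_succ_top (by omega : 1 ≤ n+1)]; push_cast; ring
    have hH2 : ∑ k ∈ Finset.Icc 1 (n+1), (1:ℚ)/(k:ℚ)^2
        = (∑ k ∈ Finset.Icc 1 n, (1:ℚ)/(k:ℚ)^2) + 1/((n:ℚ)+1)^2 := by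
      rw [Finset.sum_Icc_succ_top (by omega : 1 ≤ n+1)]; push_cast; ring
    have hshift : ∑ k ∈ Finset.Icc 1 (n+1), (n.choose (k-1) : ℚ) * (-1)^(k-1) / (k:ℚ)^2
        = (1/(n+1)) * ((∑ k ∈ Finset.Icc 1 n, (1:ℚ)/k) + 1/(n+1)) := by
      rw [shift_sum n 1]
      congr 1
      rw [← hH, ← harmonic_id (n+1) (by omega)]
      exact Finset.sum_congr rfl fun k _ => by rw [pow_one]
    rw [split_sum n 2, ih, hshift, hH, hH2]
    have hn0 : ((n:ℚ)+1) ≠ 0 := by positivity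
    set a := ∑ k ∈ Finset.Icc 1 n, (1:ℚ)/k
    field_simp
    ring
end

section
/- For every integer n ≥ 1, Σ_{k=1}^{n} C(n,k) (-1)^{k-1} / k^3 = (H_n)^3/6 + H_n · H_n^{(2)}/2 + H_n^{(3)}/3, where H_n = Σ_{k=1}^{n} 1/k, H_n^{(2)} = Σ_{k=1}^{n} 1/k^2, and H_n^{(3)} = Σ_{k=1}^{n} 1/k^3. -/
open Finset

private def A (j n : ℕ) : ℚ := ∑ k ∈ Icc 1 n, (n.choose k : ℚ) * (-1:ℚ)^(k-1) / (k:ℚ)^j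

private lemma A_zero (n : ℕ) : A 0 (n+1) = 1 := by
  have hr : Finset.Icc 1 (n+1) = (Finset.range (n+2)).erase 0 := by
    ext k; simp [Nat.lt_succ_iff]; omega
  have key : ∑ i ∈ Finset.range (n+2), (-1:ℚ)^i * ((n+1).choose i : ℚ) = 0 := by
    have h := Int.alternating_sum_range_choose (n := n+1)
    simp only [Nat.succ_ne_zero, if_false] at h
    exact_mod_cast h
  have h2 : ∑ i ∈ (Finset.range (n+2)).erase 0, (-1:ℚ)^i * ((n+1).choose i : ℚ) = -1 := by
    have := Finset.add_sum_erase (Finset.range (n+2)) (fun i => (-1:ℚ)^i * ((n+1).choose i : ℚ))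
      (by simp : (0:ℕ) ∈ Finset.range (n+2))
    rw [key] at this
    have h0 : (-1:ℚ)^(0:ℕ) * ((n+1).choose 0 : ℚ) = 1 := by norm_num
    norm_num at h0
    simp only [pow_zero, Nat.choose_zero_right, Nat.cast_one, one_mul] at this
    linarith
  unfold A
  rw [hr]
  have : ∀ k ∈ (Finset.range (n+2)).erase 0,
      ((n+1).choose k : ℚ) * (-1:ℚ)^(k-1) / (k:ℚ)^0 = -((-1:ℚ)^k * ((n+1).choose k : ℚ)) := by
    intro k hk
    simp only [Finset.mem_erase] at hk
    obtain ⟨m, rfl⟩ := Nat.exists_eq_succ_of_ne_zero hk.1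
    simp [pow_succ]
    ring
  rw [Finset.sum_congr rfl this, Finset.sum_neg_distrib, h2]
  norm_num

private lemma A_step (j n : ℕ) : A (j+1) (n+1) = A (j+1) n + A j (n+1) / ((n:ℚ)+1) := by
  have h1 : A (j+1) n = ∑ k ∈ Icc 1 (n+1), (n.choose k : ℚ) * (-1:ℚ)^(k-1) / (k:ℚ)^(j+1) := by
    rw [show A (j+1) n = ∑ k ∈ Icc 1 n, (n.choose k : ℚ) * (-1:ℚ)^(k-1) / (k:ℚ)^(j+1) from rfl,
      Finset.sum_Icc_succ_top (by omega : 1 ≤ n+1)]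
    simp [Nat.choose_succ_self]
  rw [h1]
  unfold A
  rw [Finset.sum_div, ← Finset.sum_add_distrib]
  apply Finset.sum_congr rfl
  intro k hk
  simp only [Finset.mem_Icc] at hk
  obtain ⟨m, rfl⟩ := Nat.exists_eq_succ_of_ne_zero (by omega : k ≠ 0)
  have hpas : ((n+1).choose (m+1) : ℚ) = (n.choose m : ℚ) + (n.choose (m+1) : ℚ) := by
    rw [Nat.choose_succ_succ]; push_cast; ring
  have hmul : ((n:ℚ)+1) * (n.choose m : ℚ) = ((n+1).choose (m+1) : ℚ) * ((m:ℚ)+1) := by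
    have := Nat.add_one_mul_choose_eq n m
    exact_mod_cast congrArg (Nat.cast : ℕ → ℚ) this
  have hm1 : ((m:ℚ)+1) ≠ 0 := by positivity
  have hn1 : ((n:ℚ)+1) ≠ 0 := by positivity
  simp only [Nat.succ_sub_one, Nat.cast_add, Nat.cast_one]
  push_cast [Nat.succ_eq_add_one]
  rw [hpas]
  rw [hpas] at hmul
  field_simp
  linear_combination (((m:ℚ)+1)^j) * hmul

private lemma A_one (n : ℕ) : A 1 n = ∑ k ∈ Icc 1 n, (1:ℚ)/k := by
  induction n with
  | zero => simp [A]
  | succ n ih =>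
    rw [A_step 0 n, A_zero, ih, Finset.sum_Icc_succ_top (by omega : 1 ≤ n+1)]
    simp only [Nat.cast_add, Nat.cast_one]

private lemma A_two (n : ℕ) : A 2 n =
    ((∑ k ∈ Icc 1 n, (1:ℚ)/k)^2 + ∑ k ∈ Icc 1 n, (1:ℚ)/(k:ℚ)^2)/2 := by
  induction n with
  | zero => simp [A]
  | succ n ih =>
    rw [A_step 1 n, A_one (n+1), ih,
      Finset.sum_Icc_succ_top (by omega : 1 ≤ n+1),
      Finset.sum_Icc_succ_top (by omega : 1 ≤ n+1)]
    have hx : ((n:ℚ)+1) ≠ 0 := by positivity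
    simp only [Nat.cast_add, Nat.cast_one]
    field_simp
    ring

private lemma A_three (n : ℕ) : A 3 n =
    (∑ k ∈ Icc 1 n, (1:ℚ)/k)^3/6 +
      (∑ k ∈ Icc 1 n, (1:ℚ)/k) * (∑ k ∈ Icc 1 n, (1:ℚ)/(k:ℚ)^2)/2 +
      (∑ k ∈ Icc 1 n, (1:ℚ)/(k:ℚ)^3)/3 := by
  induction n with
  | zero => simp [A]
  | succ n ih =>
    rw [A_step 2 n, A_two (n+1), ih,
      Finset.sum_Icc_succ_top (by omega : 1 ≤ n+1),
      Finset.sum_Icc_succ_top (by omega : 1 ≤ n+1),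
      Finset.sum_Icc_succ_top (by omega : 1 ≤ n+1)]
    have hx : ((n:ℚ)+1) ≠ 0 := by positivity
    simp only [Nat.cast_add, Nat.cast_one]
    field_simp
    ring

/-- For every `n ≥ 1`,
`Σ_{k=1}^{n} C(n,k) (-1)^{k-1} / k³ = H_n³/6 + H_n·H_n^{(2)}/2 + H_n^{(3)}/3`. -/
theorem alternating_binomial_sum_three (n : ℕ) (hn : 1 ≤ n) :
    (∑ k ∈ Finset.Icc 1 n, (n.choose k : ℚ) * (-1 : ℚ) ^ (k - 1) / (k : ℚ) ^ 3) =
      (∑ k ∈ Finset.Icc 1 n, (1 : ℚ) / k) ^ 3 / 6 +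
        (∑ k ∈ Finset.Icc 1 n, (1 : ℚ) / k) *
          (∑ k ∈ Finset.Icc 1 n, (1 : ℚ) / (k : ℚ) ^ 2) / 2 +
        (∑ k ∈ Finset.Icc 1 n, (1 : ℚ) / (k : ℚ) ^ 3) / 3 :=
  A_three n
end

section
/- The Euler sum S_{1,2} := Σ_{n=1}^{∞} H_n / n^2 converges and equals 2ζ(3), where H_n = Σ_{k=1}^{n} 1/k is the n-th harmonic number and ζ is the Riemann zeta function. -/
open Finset Filter Topology

namespace EulerSum12

/-- telescoping: `∑ (g n - g (n+k)) = ∑_{i<k} g i` when `g → 0`, terms nonneg. -/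
lemma telescope {g : ℕ → ℝ} (hg0 : Tendsto g atTop (𝓝 0))
    (hmono : ∀ n, 0 ≤ g n - g (n + 1)) (k : ℕ) :
    HasSum (fun n => g n - g (n + k)) (∑ i ∈ Finset.range k, g i) := by
  have hstep : ∀ n m, 0 ≤ g n - g (n + m) := by
    intro n m
    induction m with
    | zero => simp
    | succ m ih =>
      have h := hmono (n + m)
      have e : n + (m + 1) = n + m + 1 := by omega
      rw [e]; linarith
  rw [hasSum_iff_tendsto_nat_of_nonneg (fun n => hstep n k)]
  have key : ∀ N, ∑ n ∈ Finset.range N, (g n - g (n + k)) =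
      (∑ i ∈ Finset.range k, g i) - ∑ i ∈ Finset.range k, g (N + i) := by
    intro N
    induction N with
    | zero => simp
    | succ N ih =>
      rw [Finset.sum_range_succ, ih]
      have h1 : ∑ i ∈ Finset.range k, g (N + i) =
          g N + ∑ i ∈ Finset.range k, g (N + 1 + i) - g (N + k) := by
        have e1 : ∑ i ∈ Finset.range (k+1), g (N + i)
            = ∑ i ∈ Finset.range k, g (N + i) + g (N + k) := by
          rw [Finset.sum_range_succ]
        have e2 : ∑ i ∈ Finset.range (k+1), g (N + i)
            = g N + ∑ i ∈ Finset.range k, g (N + (i + 1)) := by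
          rw [Finset.sum_range_succ']
          simp [add_comm]
        have e3 : ∀ i, g (N + (i + 1)) = g (N + 1 + i) := by
          intro i; ring_nf
        simp_rw [e3] at e2
        linarith [e1.symm.trans e2]
      rw [h1]; ring
  simp_rw [key]
  have : Tendsto (fun N => ∑ i ∈ Finset.range k, g (N + i)) atTop (𝓝 0) := by
    have := tendsto_finset_sum (Finset.range k)
      (fun i _ => hg0.comp (tendsto_add_atTop_nat i))
    simpa [Function.comp] using this
  simpa using (tendsto_const_nhds (x := ∑ i ∈ Finset.range k, g i)).sub this

noncomputable def z3 : ℝ := ∑' n : ℕ, 1 / ((n : ℝ) + 1) ^ 3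

lemma hz3 : HasSum (fun n : ℕ => 1 / ((n : ℝ) + 1) ^ 3) z3 := by
  apply Summable.hasSum
  have : Summable (fun n : ℕ => 1 / (n : ℝ) ^ 3) := by
    simpa using (Real.summable_one_div_nat_pow (p := 3)).mpr (by norm_num)
  have := (summable_nat_add_iff 1).mpr this
  simpa using this

noncomputable def a (n : ℕ) : ℝ := (harmonic (n + 1) : ℝ) / ((n : ℝ) + 1) ^ 2

noncomputable def f (p : ℕ × ℕ) : ℝ :=
  1 / (((p.1 : ℝ) + 1) * ((p.2 : ℝ) + 1) * ((p.1 : ℝ) + (p.2 : ℝ) + 2))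

noncomputable def h (p : ℕ × ℕ) : ℝ :=
  1 / (((p.1 : ℝ) + 1) * ((p.1 : ℝ) + (p.2 : ℝ) + 2) ^ 2)

lemma f_nonneg (p : ℕ × ℕ) : 0 ≤ f p := by unfold f; positivity

lemma h_nonneg (p : ℕ × ℕ) : 0 ≤ h p := by unfold h; positivity

lemma h_le_f (p : ℕ × ℕ) : h p ≤ f p := by
  obtain ⟨m, n⟩ := p
  unfold f h
  dsimp only
  apply one_div_le_one_div_of_le (by positivity)
  have h1 : (n : ℝ) + 1 ≤ (m : ℝ) + (n : ℝ) + 2 := by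
    have : (0:ℝ) ≤ m := Nat.cast_nonneg m; linarith
  have h2 : (0:ℝ) < (m : ℝ) + 1 := by positivity
  have h3 : (0:ℝ) < (m : ℝ) + (n : ℝ) + 2 := by positivity
  nlinarith [mul_le_mul_of_nonneg_left h1 (le_of_lt (mul_pos h2 h3))]

lemma summable_f : Summable f := by
  have hg : Summable (fun m : ℕ => 1 / (((m : ℝ) + 1) * Real.sqrt ((m : ℝ) + 1))) := by
    have base : Summable (fun m : ℕ => 1 / (m : ℝ) ^ ((3:ℝ)/2)) :=
      Real.summable_one_div_nat_rpow.mpr (by norm_num)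
    have := (summable_nat_add_iff 1).mpr base
    apply this.congr
    intro m
    have hpos : (0:ℝ) < (m : ℝ) + 1 := by positivity
    have : ((m : ℝ) + 1) ^ ((3:ℝ)/2) = ((m : ℝ) + 1) * Real.sqrt ((m : ℝ) + 1) := by
      rw [show (3:ℝ)/2 = 1 + 1/2 by norm_num, Real.rpow_add hpos, Real.rpow_one,
        ← Real.sqrt_eq_rpow]
    push_cast
    rw [this]
  have hprod := hg.mul_of_nonneg hg (fun m => by positivity) (fun m => by positivity)
  apply Summable.of_nonneg_of_le f_nonneg _ hprod
  rintro ⟨m, n⟩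
  unfold f
  have hm : (0:ℝ) < (m : ℝ) + 1 := by positivity
  have hn : (0:ℝ) < (n : ℝ) + 1 := by positivity
  have hsm : Real.sqrt ((m:ℝ)+1) ^ 2 = (m:ℝ)+1 := Real.sq_sqrt hm.le
  have hsn : Real.sqrt ((n:ℝ)+1) ^ 2 = (n:ℝ)+1 := Real.sq_sqrt hn.le
  have hsqrt : Real.sqrt ((m:ℝ)+1) * Real.sqrt ((n:ℝ)+1) ≤ (m:ℝ) + (n:ℝ) + 2 := by
    nlinarith [Real.sqrt_nonneg ((m:ℝ)+1), Real.sqrt_nonneg ((n:ℝ)+1),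
      sq_nonneg (Real.sqrt ((m:ℝ)+1) - Real.sqrt ((n:ℝ)+1))]
  rw [div_mul_div_comm, one_mul]
  apply one_div_le_one_div_of_le
  · positivity
  · calc ((m:ℝ)+1) * Real.sqrt ((m:ℝ)+1) * (((n:ℝ)+1) * Real.sqrt ((n:ℝ)+1))
        = (((m:ℝ)+1) * ((n:ℝ)+1)) * (Real.sqrt ((m:ℝ)+1) * Real.sqrt ((n:ℝ)+1)) := by ring
      _ ≤ (((m:ℝ)+1) * ((n:ℝ)+1)) * ((m:ℝ) + (n:ℝ) + 2) := by
          apply mul_le_mul_of_nonneg_left hsqrt (by positivity)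

lemma summable_h : Summable h := Summable.of_nonneg_of_le h_nonneg h_le_f summable_f

lemma harmonic_cast (k : ℕ) :
    (harmonic k : ℝ) = ∑ i ∈ Finset.range k, 1 / ((i : ℝ) + 1) := by
  unfold harmonic
  push_cast
  simp [one_div]

/-- fiberwise sum of `f` is `a`. -/
lemma fiber_f (m : ℕ) : HasSum (fun n => f (m, n)) (a m) := by
  have hg0 : Tendsto (fun n : ℕ => 1 / ((n : ℝ) + 1)) atTop (𝓝 0) := by
    exact tendsto_one_div_add_atTop_nhds_zero_nat
  have hmono : ∀ n : ℕ, 0 ≤ 1 / ((n : ℝ) + 1) - 1 / (((n+1) : ℕ) + 1) := by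
    intro n
    have h1 : (0:ℝ) < (n:ℝ) + 1 := by positivity
    push_cast
    have h2 : (0:ℝ) < (n:ℝ) + 2 := by positivity
    rw [sub_nonneg]
    apply one_div_le_one_div_of_le h1
    linarith
  have key := (telescope hg0 hmono (m + 1)).mul_left (1 / ((m:ℝ)+1)^2)
  have hsum : (1 / ((m:ℝ)+1)^2) * ∑ i ∈ Finset.range (m+1), 1 / ((i : ℝ) + 1) = a m := by
    rw [← harmonic_cast]
    unfold a
    ring
  rw [hsum] at key
  apply key.congr_fun
  intro n
  unfold f
  have hm : (0:ℝ) < (m:ℝ) + 1 := by positivity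
  have hn : (0:ℝ) < (n:ℝ) + 1 := by positivity
  have hmn : (0:ℝ) < (m:ℝ) + (n:ℝ) + 2 := by positivity
  have : ((n + (m+1) : ℕ) : ℝ) + 1 = (m:ℝ) + (n:ℝ) + 2 := by push_cast; ring
  rw [this]
  field_simp
  ring

noncomputable def T : ℝ := ∑' p, f p

lemma hasSum_a : HasSum a T := (summable_f.hasSum).prod_fiberwise fiber_f

noncomputable def Th : ℝ := ∑' p, h p

lemma hT2 : T = 2 * Th := by
  have h1 : HasSum h Th := summable_h.hasSum
  have h2 : HasSum (fun p : ℕ × ℕ => h (p.2, p.1)) Th := by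
    have := (Equiv.prodComm ℕ ℕ).hasSum_iff.mpr h1
    exact this.congr_fun (fun p => rfl)
  have h3 : HasSum f (Th + Th) := by
    have := h1.add h2
    apply this.congr_fun
    rintro ⟨m, n⟩
    unfold f h
    simp only
    have hm : (0:ℝ) < (m:ℝ) + 1 := by positivity
    have hn : (0:ℝ) < (n:ℝ) + 1 := by positivity
    have hmn : (0:ℝ) < (m:ℝ) + (n:ℝ) + 2 := by positivity
    field_simp
    ring
  have := h3.tsum_eq
  rw [show T = ∑' p, f p from rfl, this]; ring

/-- grouping `h` along antidiagonals. -/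
lemma hasSum_U : HasSum (fun N : ℕ => (harmonic (N + 1) : ℝ) / ((N : ℝ) + 2) ^ 2) Th := by
  have h1 : HasSum (fun x : Σ n : ℕ, Finset.HasAntidiagonal.antidiagonal n =>
      h (Finset.HasAntidiagonal.sigmaAntidiagonalEquivProd x)) Th :=
    Finset.HasAntidiagonal.sigmaAntidiagonalEquivProd.hasSum_iff.mpr summable_h.hasSum
  apply h1.sigma
  intro N
  have : HasSum (fun c : Finset.HasAntidiagonal.antidiagonal N => h (c : ℕ × ℕ))
      (∑ p ∈ Finset.HasAntidiagonal.antidiagonal N, h p) := by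
    have := hasSum_fintype (fun c : Finset.HasAntidiagonal.antidiagonal N => h (c : ℕ × ℕ))
    rwa [Finset.sum_coe_sort (Finset.HasAntidiagonal.antidiagonal N) h] at this
  convert this using 1
  · rfl
  rw [Finset.Nat.sum_antidiagonal_eq_sum_range_succ_mk]
  have step : ∀ k ∈ Finset.range (N + 1), h (k, N - k) = 1/((N:ℝ)+2)^2 * (1 / ((k:ℝ) + 1)) := by
    intro k hk
    rw [Finset.mem_range] at hk
    unfold h
    have hcast : ((N - k : ℕ) : ℝ) = (N : ℝ) - (k : ℝ) := by
      rw [Nat.cast_sub (Nat.lt_succ_iff.mp hk)]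
    simp only [hcast]
    have hk1 : (0:ℝ) < (k:ℝ) + 1 := by positivity
    have hN2 : (0:ℝ) < (N:ℝ) + 2 := by positivity
    rw [show (k:ℝ) + ((N:ℝ) - (k:ℝ)) + 2 = (N:ℝ) + 2 by ring]
    field_simp
  rw [Finset.sum_congr rfl step, ← Finset.mul_sum, ← harmonic_cast]
  ring

lemma T_eq : T = 2 * z3 := by
  have hshift_a : HasSum (fun n => a (n + 1)) (T - 1) := by
    have : HasSum a ((T - 1) + ∑ i ∈ Finset.range 1, a i) := by
      have ha0 : a 0 = 1 := by unfold a; simp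
      simpa [ha0] using hasSum_a
    exact (hasSum_nat_add_iff 1).mpr this
  have hshift_z : HasSum (fun n : ℕ => 1 / ((n : ℝ) + 2) ^ 3) (z3 - 1) := by
    have : HasSum (fun n : ℕ => 1 / ((n : ℝ) + 1) ^ 3) ((z3 - 1) + ∑ i ∈ Finset.range 1,
        1 / ((i : ℝ) + 1) ^ 3) := by simpa using hz3
    have := (hasSum_nat_add_iff (f := fun n : ℕ => 1 / ((n : ℝ) + 1) ^ 3) 1).mpr this
    apply this.congr_fun
    intro n; push_cast; ring_nf
  have hU' : HasSum (fun N : ℕ => (harmonic (N + 1) : ℝ) / ((N : ℝ) + 2) ^ 2)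
      ((T - 1) - (z3 - 1)) := by
    have := hshift_a.sub hshift_z
    apply this.congr_fun
    intro n
    unfold a
    rw [harmonic_succ (n + 1)]
    push_cast
    have h2 : (0:ℝ) < (n:ℝ) + 2 := by positivity
    field_simp
    ring
  have := hasSum_U.unique hU'
  have hT2' := hT2
  rw [this] at hT2'
  linarith

lemma real_result : HasSum a (2 * z3) := by rw [← T_eq]; exact hasSum_a

end EulerSum12

/-- The Euler sum `S_{1,2} = Σ_{n≥1} H_n/n²` converges and equals
`2ζ(3)`, where `H_n` is the `n`-th harmonic number and `ζ` the Riemann zeta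
function. -/
theorem euler_sum_one_two :
    HasSum (fun n : ℕ => ((harmonic (n + 1) : ℝ) : ℂ) / ((n : ℂ) + 1) ^ 2)
      (2 * riemannZeta 3) := by
  have hreal := EulerSum12.real_result
  have hC : HasSum (fun n : ℕ => ((EulerSum12.a n : ℝ) : ℂ)) ((2 * EulerSum12.z3 : ℝ) : ℂ) :=
    hreal.mapL Complex.ofRealCLM
  have hz3C : HasSum (fun n : ℕ => 1 / ((n : ℂ) + 1) ^ 3) ((EulerSum12.z3 : ℝ) : ℂ) := by
    have := EulerSum12.hz3.mapL Complex.ofRealCLM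
    apply this.congr_fun
    intro n
    simp only [Complex.ofRealCLM_apply]
    push_cast
    ring
  have hzeta : riemannZeta 3 = ((EulerSum12.z3 : ℝ) : ℂ) := by
    have h1 : riemannZeta 3 = ∑' n : ℕ, 1 / (n : ℂ) ^ 3 := by
      have := zeta_nat_eq_tsum_of_gt_one (k := 3) (by norm_num)
      simpa using this
    have h2 : HasSum (fun n : ℕ => 1 / (n : ℂ) ^ 3) ((EulerSum12.z3 : ℝ) : ℂ) := by
      have hshift : HasSum (fun n : ℕ => 1 / (((n + 1) : ℕ) : ℂ) ^ 3)
          ((EulerSum12.z3 : ℝ) : ℂ) := by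
        apply hz3C.congr_fun
        intro n; push_cast; ring_nf
      have := (hasSum_nat_add_iff (f := fun n : ℕ => 1 / (n : ℂ) ^ 3) 1).mp hshift
      simpa using this
    rw [h1, h2.tsum_eq]
  rw [hzeta]
  have hcast : ((2 * EulerSum12.z3 : ℝ) : ℂ) = 2 * ((EulerSum12.z3 : ℝ) : ℂ) := by
    push_cast; ring
  rw [hcast] at hC
  apply hC.congr_fun
  intro n
  simp only [EulerSum12.a]
  push_cast
  ring
end

section
/- The Euler sum S_{1,3} := Σ_{n=1}^{∞} H_n / n^3 converges and equals (5/4)·ζ(4), where H_n = Σ_{k=1}^{n} 1/k is the n-th harmonic number and ζ is the Riemann zeta function. -/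
open Finset

noncomputable def esGone : ℕ × ℕ → ℝ := fun p =>
  1 / (((p.1 : ℝ) + (p.2 : ℝ) + 2) ^ 2 * ((p.1 : ℝ) + 1) ^ 2)

noncomputable def esH : ℕ × ℕ → ℝ := fun p =>
  1 / (((p.1 : ℝ) + 1) * ((p.1 : ℝ) + (p.2 : ℝ) + 2) ^ 3)

noncomputable def esF : ℕ × ℕ → ℝ := fun p =>
  1 / (((p.1 : ℝ) + 1) ^ 2 * ((p.2 : ℝ) + 1) ^ 2)

lemma es_base_summable (k : ℕ) (hk : 1 < k) :
    Summable (fun n : ℕ => 1 / ((n : ℝ) + 1) ^ k) := by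
  have h0 := Real.summable_one_div_nat_pow.2 hk
  have h := (summable_nat_add_iff 1).2 h0
  refine h.congr fun n => ?_
  push_cast
  ring

lemma esF_summable : Summable esF := by
  have h2 := es_base_summable 2 one_lt_two
  have := h2.mul_of_nonneg h2 (fun n => by positivity) (fun n => by positivity)
  refine this.congr fun p => ?_
  simp only [esF]
  rw [div_mul_div_comm, one_mul]

lemma esGone_summable : Summable esGone := by
  refine esF_summable.of_nonneg_of_le (fun p => by unfold esGone; positivity) fun p => ?_
  simp only [esGone, esF]
  have hx : (0:ℝ) ≤ (p.1 : ℝ) := Nat.cast_nonneg _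
  have hy : (0:ℝ) ≤ (p.2 : ℝ) := Nat.cast_nonneg _
  have key : ((p.2:ℝ)+1)^2 ≤ ((p.1:ℝ)+(p.2:ℝ)+2)^2 := by nlinarith
  exact one_div_le_one_div_of_le (by positivity)
    (by nlinarith [mul_le_mul_of_nonneg_right key (sq_nonneg ((p.1:ℝ)+1))])

lemma esH_summable : Summable esH := by
  refine esF_summable.of_nonneg_of_le (fun p => by unfold esH; positivity) fun p => ?_
  simp only [esH, esF]
  have hx : (0:ℝ) ≤ (p.1 : ℝ) := Nat.cast_nonneg _
  have hy : (0:ℝ) ≤ (p.2 : ℝ) := Nat.cast_nonneg _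
  exact one_div_le_one_div_of_le (by positivity) (by nlinarith [mul_nonneg hx hy, mul_nonneg (mul_nonneg hx hy) hy, mul_nonneg (mul_nonneg hx hx) hy])

noncomputable def esZ22 : ℝ := ∑' p, esGone p
noncomputable def esZ31 : ℝ := ∑' p, esH p
noncomputable def esZ4 : ℝ := ∑' n : ℕ, 1 / ((n : ℝ) + 1) ^ 4

lemma esGone_hasSum : HasSum esGone esZ22 := esGone_summable.hasSum
lemma esH_hasSum : HasSum esH esZ31 := esH_summable.hasSum
lemma esZ4_hasSum : HasSum (fun n : ℕ => 1 / ((n : ℝ) + 1) ^ 4) esZ4 :=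
  (es_base_summable 4 (by norm_num)).hasSum

lemma esGone_swap_hasSum : HasSum (fun p : ℕ × ℕ => esGone p.swap) esZ22 := by
  have := (Equiv.prodComm ℕ ℕ).hasSum_iff (f := esGone) (a := esZ22)
  exact this.2 esGone_hasSum

lemma esH_swap_hasSum : HasSum (fun p : ℕ × ℕ => esH p.swap) esZ31 := by
  have := (Equiv.prodComm ℕ ℕ).hasSum_iff (f := esH) (a := esZ31)
  exact this.2 esH_hasSum

/-- partial-fraction evaluation of esF -/
lemma esF_hasSum_pf :
    HasSum esF (esZ22 + esZ22 + (esZ31 + esZ31) + (esZ31 + esZ31)) := by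
  have h := (((esGone_hasSum.add esGone_swap_hasSum).add
    (esH_hasSum.add esH_swap_hasSum)).add (esH_hasSum.add esH_swap_hasSum))
  refine h.congr_fun fun p => ?_
  simp only [esF, esGone, esH, Prod.snd_swap, Prod.fst_swap]
  have hx : (0:ℝ) ≤ (p.1 : ℝ) := Nat.cast_nonneg _
  have hy : (0:ℝ) ≤ (p.2 : ℝ) := Nat.cast_nonneg _
  have h1 : ((p.1:ℝ) + 1) ≠ 0 := by positivity
  have h2 : ((p.2:ℝ) + 1) ≠ 0 := by positivity
  have h3 : ((p.1:ℝ) + (p.2:ℝ) + 2) ≠ 0 := by positivity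
  have h4 : ((p.2:ℝ) + (p.1:ℝ) + 2) ≠ 0 := by positivity
  field_simp
  ring

/-- trichotomy evaluation of esF -/
lemma esF_hasSum_tri :
    HasSum esF (esZ22 + esZ22 + esZ4) := by
  have hlt : HasSum (fun p : ℕ × ℕ => if p.1 < p.2 then esF p else 0) esZ22 := by
    have hinj : Function.Injective (fun q : ℕ × ℕ => (q.1, q.1 + q.2 + 1)) := by
      intro a b h
      simp only [Prod.mk.injEq] at h
      obtain ⟨h1, h2⟩ := h
      exact Prod.ext h1 (by omega)
    have hout : ∀ x ∉ Set.range (fun q : ℕ × ℕ => (q.1, q.1 + q.2 + 1)),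
        (if x.1 < x.2 then esF x else 0) = 0 := by
      rintro ⟨a, b⟩ hx
      simp only [Set.mem_range, Prod.mk.injEq, not_exists] at hx
      rw [if_neg]
      intro hab
      exact hx (a, b - a - 1) ⟨rfl, by omega⟩
    refine (hinj.hasSum_iff hout).1 ?_
    refine esGone_hasSum.congr_fun fun q => ?_
    simp only [Function.comp]
    rw [if_pos (by omega)]
    simp only [esF, esGone]
    push_cast
    ring_nf
  have hgt : HasSum (fun p : ℕ × ℕ => if p.2 < p.1 then esF p else 0) esZ22 := by
    have := (Equiv.prodComm ℕ ℕ).hasSum_iff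
      (f := fun p : ℕ × ℕ => if p.1 < p.2 then esF p else 0) (a := esZ22)
    refine (this.2 hlt).congr_fun fun p => ?_
    simp only [Function.comp, Equiv.prodComm_apply, Prod.fst_swap, Prod.snd_swap, esF]
    by_cases h : p.2 < p.1
    · simp [h]
      ring
    · simp [h]
  have hdiag : HasSum (fun p : ℕ × ℕ => if p.1 = p.2 then esF p else 0) esZ4 := by
    have hinj : Function.Injective (fun n : ℕ => (n, n)) := by
      intro a b h
      exact (Prod.ext_iff.1 h).1
    have hout : ∀ x ∉ Set.range (fun n : ℕ => (n, n)),
        (if x.1 = x.2 then esF x else 0) = 0 := by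
      rintro ⟨a, b⟩ hx
      simp only [Set.mem_range, Prod.mk.injEq, not_exists] at hx
      rw [if_neg]
      intro hab
      exact hx a ⟨rfl, hab⟩
    refine (hinj.hasSum_iff hout).1 ?_
    refine esZ4_hasSum.congr_fun fun n => ?_
    simp only [Function.comp, esF, if_true]
    ring
  refine ((hlt.add hgt).add hdiag).congr_fun fun p => ?_
  rcases lt_trichotomy p.1 p.2 with h | h | h
  · rw [if_pos h, if_neg (by omega), if_neg (by omega)]; ring
  · rw [if_neg (by omega), if_neg (by omega), if_pos h]; ring
  · rw [if_neg (by omega), if_pos h, if_neg (by omega)]; ring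

lemma esZ31_eq : esZ31 = esZ4 / 4 := by
  have := esF_hasSum_pf.unique esF_hasSum_tri
  linarith

def esEquiv : (Σ n : ℕ, Fin (n + 1)) ≃ ℕ × ℕ where
  toFun x := ((x.2 : ℕ), x.1 - (x.2 : ℕ))
  invFun p := ⟨p.1 + p.2, ⟨p.1, by omega⟩⟩
  left_inv := by
    rintro ⟨n, a⟩
    have ha : (a : ℕ) ≤ n := Nat.lt_succ_iff.mp a.2
    refine Sigma.ext ?_ ?_
    · simp only []
      omega
    · refine (Fin.heq_ext_iff (by simp only []; omega)).2 ?_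
      simp only []
  right_inv := by
    rintro ⟨a, b⟩
    simp only [Prod.ext_iff]
    refine ⟨trivial, ?_⟩
    show a + b - a = b
    omega

lemma harmonic_cast (m : ℕ) :
    ((harmonic m : ℚ) : ℝ) = ∑ i ∈ Finset.range m, 1 / ((i : ℝ) + 1) := by
  rw [harmonic]
  push_cast
  simp [one_div]

lemma esH_grouped :
    HasSum (fun n : ℕ => ((harmonic (n + 1) : ℚ) : ℝ) / ((n : ℝ) + 2) ^ 3) esZ31 := by
  have hs : HasSum (esH ∘ esEquiv) esZ31 := esEquiv.hasSum_iff.2 esH_hasSum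
  have := hs.sigma (fun n => hasSum_fintype (fun a : Fin (n + 1) => (esH ∘ esEquiv) ⟨n, a⟩))
  refine this.congr_fun fun n => ?_
  rw [eq_comm]
  have : ∀ a : Fin (n + 1), (esH ∘ esEquiv) ⟨n, a⟩ = 1 / (((a : ℕ) : ℝ) + 1) / ((n : ℝ) + 2) ^ 3 := by
    intro a
    have ha : (a : ℕ) ≤ n := Nat.lt_succ_iff.mp a.2
    simp only [Function.comp, esEquiv, Equiv.coe_fn_mk, esH]
    have hcast : (((a : ℕ) : ℝ) + ((n - (a : ℕ) : ℕ) : ℝ)) = (n : ℝ) := by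
      rw [← Nat.cast_add]
      congr 1
      omega
    rw [show ((((a:ℕ), n - (a:ℕ)) : ℕ × ℕ).1 : ℝ) = ((a:ℕ):ℝ) from rfl]
    rw [show ((((a:ℕ), n - (a:ℕ)) : ℕ × ℕ).2 : ℝ) = ((n - (a:ℕ) : ℕ):ℝ) from rfl]
    rw [show ((a:ℕ):ℝ) + ((n - (a:ℕ) : ℕ):ℝ) + 2 = (n:ℝ) + 2 by rw [hcast]]
    rw [div_div]
  rw [Finset.sum_congr rfl (fun a _ => this a)]
  rw [← Finset.sum_div, harmonic_cast]
  rw [Fin.sum_univ_eq_sum_range (fun i => 1 / ((i : ℝ) + 1))]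

lemma esS_hasSum :
    HasSum (fun n : ℕ => ((harmonic (n + 1) : ℚ) : ℝ) / ((n : ℝ) + 1) ^ 3) (5 / 4 * esZ4) := by
  have h1 : HasSum (fun n : ℕ => ((harmonic n : ℚ) : ℝ) / ((n : ℝ) + 1) ^ 3) esZ31 := by
    have h0 : HasSum (fun n : ℕ =>
        ((harmonic (n + 1) : ℚ) : ℝ) / (((n + 1 : ℕ) : ℝ) + 1) ^ 3) esZ31 := by
      refine esH_grouped.congr_fun fun n => ?_
      push_cast
      ring
    have := (hasSum_nat_add_iff (f := fun n : ℕ => ((harmonic n : ℚ) : ℝ) / ((n : ℝ) + 1) ^ 3) 1).1 h0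
    simpa [harmonic_zero] using this
  have h2 := h1.add esZ4_hasSum
  have hval : esZ31 + esZ4 = 5 / 4 * esZ4 := by
    rw [esZ31_eq]; ring
  rw [hval] at h2
  refine h2.congr_fun fun n => ?_
  rw [harmonic_succ]
  push_cast
  have hne : ((n : ℝ) + 1) ≠ 0 := by positivity
  field_simp

lemma esZeta4_eq : riemannZeta 4 = ((esZ4 : ℝ) : ℂ) := by
  have hc : HasSum (fun n : ℕ => 1 / ((n : ℂ) + 1) ^ (4 : ℂ)) ((esZ4 : ℝ) : ℂ) := by
    refine (Complex.hasSum_ofReal.2 esZ4_hasSum).congr_fun fun n => ?_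
    rw [show ((n : ℂ) + 1) ^ (4 : ℂ) = ((n : ℂ) + 1) ^ (4 : ℕ) by
      rw [show (4 : ℂ) = ((4 : ℕ) : ℂ) by norm_num, Complex.cpow_natCast]]
    push_cast
    ring
  rw [zeta_eq_tsum_one_div_nat_add_one_cpow (by norm_num)]
  exact hc.tsum_eq


/-- The Euler sum `S_{1,3} = Σ_{n≥1} H_n/n³` converges and equals
`(5/4)ζ(4)`, where `H_n` is the `n`-th harmonic number and `ζ` the Riemann zeta
function. -/
theorem euler_sum_one_three :
    HasSum (fun n : ℕ => ((harmonic (n + 1) : ℝ) : ℂ) / ((n : ℂ) + 1) ^ 3)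
      ((5 / 4) * riemannZeta 4) := by
  rw [esZeta4_eq, show (5 / 4 : ℂ) * ((esZ4 : ℝ) : ℂ) = (((5 / 4 * esZ4 : ℝ)) : ℂ) by
    push_cast; ring]
  refine (Complex.hasSum_ofReal.2 esS_hasSum).congr_fun fun n => ?_
  push_cast
  ring
end

section
/- The Euler sum S_{2,4} := Σ_{n=1}^{∞} H_n^{(2)} / n^4 converges and equals ζ(3)^2 - (1/3)·ζ(6), where H_n^{(2)} = Σ_{k=1}^{n} 1/k^2 and ζ is the Riemann zeta function. -/
open Finset

namespace ES24

noncomputable def g (a : ℕ) (n : ℕ) : ℂ := 1 / ((n : ℂ) + 1) ^ a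

noncomputable def z (a : ℕ) : ℂ := ∑' n : ℕ, g a n

noncomputable def F (b a : ℕ) (p : ℕ × ℕ) : ℂ := g b p.1 * g a (p.1 + p.2 + 1)

noncomputable def M (b a : ℕ) (p : ℕ × ℕ) : ℂ := g b p.2 * g a (p.1 + p.2 + 1)

noncomputable def Q (b a : ℕ) : ℂ := ∑' p : ℕ × ℕ, F b a p

lemma norm_g (a n : ℕ) : ‖g a n‖ = 1 / ((n : ℝ) + 1) ^ a := by
  rw [g, norm_div, norm_pow, norm_one]
  congr 2
  have : ((n : ℂ) + 1) = ((n + 1 : ℕ) : ℂ) := by push_cast; ring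
  rw [this, Complex.norm_natCast]
  push_cast; ring

lemma summable_real {a : ℕ} (ha : 2 ≤ a) :
    Summable (fun n : ℕ => 1 / ((n : ℝ) + 1) ^ a) := by
  have h : Summable (fun n : ℕ => 1 / ((n : ℝ)) ^ a) :=
    Real.summable_one_div_nat_pow.mpr (by omega)
  have := (summable_nat_add_iff 1).mpr h
  refine this.congr fun n => ?_
  push_cast; ring_nf

lemma summable_g {a : ℕ} (ha : 2 ≤ a) : Summable (g a) := by
  refine Summable.of_norm ?_
  simpa only [norm_g] using summable_real ha

lemma hasSum_g {a : ℕ} (ha : 2 ≤ a) : HasSum (g a) (z a) := (summable_g ha).hasSum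

lemma hasSum_tail {a : ℕ} (ha : 2 ≤ a) (j : ℕ) :
    HasSum (fun u : ℕ => g a (u + (j + 1))) (z a - ∑ i ∈ range (j + 1), g a i) := by
  refine (hasSum_nat_add_iff (j + 1)).mpr ?_
  rw [sub_add_cancel]
  exact hasSum_g ha

lemma summable_prod_real {b a : ℕ} (hb : 2 ≤ b) (ha : 2 ≤ a) :
    Summable (fun p : ℕ × ℕ => (1 / ((p.1 : ℝ) + 1) ^ b) * (1 / ((p.2 : ℝ) + 1) ^ a)) :=
  (summable_real hb).mul_of_nonneg (summable_real ha)
    (fun n => by positivity) (fun n => by positivity)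

lemma norm_F (b a : ℕ) (p : ℕ × ℕ) :
    ‖F b a p‖ = (1 / ((p.1 : ℝ) + 1) ^ b) * (1 / (((p.1 : ℝ) + 1) + ((p.2 : ℝ) + 1)) ^ a) := by
  rw [F, norm_mul, norm_g, norm_g]
  push_cast
  ring_nf

lemma summable_F {b a : ℕ} (hb : 2 ≤ b) (ha : 2 ≤ a) : Summable (F b a) := by
  refine Summable.of_norm_bounded (summable_prod_real hb ha) fun p => ?_
  rw [norm_F]
  have h1 : (0:ℝ) < (p.1 : ℝ) + 1 := by positivity
  have h2 : (0:ℝ) < (p.2 : ℝ) + 1 := by positivity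
  refine mul_le_mul_of_nonneg_left ?_ (by positivity)
  apply one_div_le_one_div_of_le (by positivity)
  exact pow_le_pow_left₀ (by positivity) (by linarith) a

lemma summable_F15 : Summable (F 1 5) := by
  refine Summable.of_norm_bounded (summable_prod_real (le_refl 2) (le_refl 2)) fun p => ?_
  rw [norm_F]
  have h1 : (0:ℝ) < (p.1 : ℝ) + 1 := by positivity
  have h2 : (0:ℝ) < (p.2 : ℝ) + 1 := by positivity
  set X := (p.1:ℝ)+1 with hX
  set Y := (p.2:ℝ)+1 with hY
  rw [show (1:ℝ) / X ^ 2 * (1 / Y ^ 2) = 1 / (X^2 * Y^2) by rw [div_mul_div_comm, one_mul],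
    show (1:ℝ) / X ^ 1 * (1 / (X+Y) ^ 5) = 1 / (X^1 * (X+Y)^5) by rw [div_mul_div_comm, one_mul]]
  apply one_div_le_one_div_of_le (by positivity)
  have hXN : X ≤ X + Y := by linarith
  have hYN : Y ≤ X + Y := by linarith
  have h1N : (1:ℝ) ≤ X + Y := by linarith
  calc X ^ 2 * Y ^ 2 = X * X * Y^2 * 1 * 1 := by ring
    _ ≤ X * (X+Y) * (X+Y)^2 * (X+Y) * (X+Y) := by
        gcongr <;> first | linarith | positivity
    _ = X ^ 1 * (X+Y)^5 := by ring

lemma hasSum_row {b a : ℕ} (ha : 2 ≤ a) (hF : Summable (F b a)) :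
    HasSum (fun j : ℕ => g b j * (z a - ∑ i ∈ range (j + 1), g a i)) (Q b a) := by
  refine HasSum.prod_fiberwise hF.hasSum fun j => ?_
  have h := (hasSum_tail ha j).mul_left (g b j)
  have he : (fun u : ℕ => F b a (j, u)) = fun u => g b j * g a (u + (j + 1)) := by
    funext u
    have huj : j + u + 1 = u + (j + 1) := by omega
    simp only [F, huj]
  rw [he]
  exact h

lemma hasSum_col {b a : ℕ} (hF : Summable (F b a)) :
    HasSum (fun k : ℕ => (∑ i ∈ range k, g b i) * g a k) (Q b a) := by
  have hinj : Function.Injective (fun p : ℕ × ℕ => (p.1 + p.2 + 1, p.1)) := by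
    intro p q h
    simp only [Prod.mk.injEq] at h
    obtain ⟨h1, h2⟩ := h
    exact Prod.ext h2 (by omega)
  set D : ℕ × ℕ → ℂ := fun q => if q.2 < q.1 then g b q.2 * g a q.1 else 0 with hD
  have hDF : HasSum D (Q b a) := by
    rw [← Function.Injective.hasSum_iff hinj ?_]
    · have he : D ∘ (fun p : ℕ × ℕ => (p.1 + p.2 + 1, p.1)) = F b a := by
        funext p
        simp only [hD, Function.comp, F]
        rw [if_pos (by omega)]
      rw [he]
      exact hF.hasSum
    · intro q hq
      by_cases h : q.2 < q.1
      · exfalso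
        exact hq ⟨(q.2, q.1 - q.2 - 1), Prod.ext (by simp; omega) rfl⟩
      · exact if_neg h
  refine hDF.prod_fiberwise fun k => ?_
  have hzero : ∀ j ∉ range k, D (k, j) = 0 := by
    intro j hj
    exact if_neg (by simpa using hj)
  have hsum : HasSum (fun j => D (k, j)) (∑ j ∈ range k, D (k, j)) := hasSum_sum_of_ne_finset_zero hzero
  have hval : ∑ j ∈ range k, D (k, j) = (∑ i ∈ range k, g b i) * g a k := by
    rw [Finset.sum_mul]
    exact Finset.sum_congr rfl fun j hj => if_pos (Finset.mem_range.mp hj)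
  rw [← hval]
  exact hsum

lemma hasSum_mirror {b a : ℕ} (hF : Summable (F b a)) : HasSum (M b a) (Q b a) := by
  have h := (Equiv.prodComm ℕ ℕ).hasSum_iff.mpr hF.hasSum
  have he : (F b a) ∘ (Equiv.prodComm ℕ ℕ) = M b a := by
    funext p
    have hc : p.2 + p.1 + 1 = p.1 + p.2 + 1 := by omega
    simp only [Function.comp, Equiv.prodComm_apply, Prod.swap, F, M, hc]
  rw [he] at h
  exact h

lemma cast_ne (n : ℕ) : ((n : ℂ) + 1) ≠ 0 := by
  have : ((n : ℂ) + 1) = ((n + 1 : ℕ) : ℂ) := by push_cast; ring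
  rw [this]
  exact Nat.cast_ne_zero.mpr (Nat.succ_ne_zero n)

lemma cast_sum (p : ℕ × ℕ) :
    (((p.1 + p.2 + 1 : ℕ) : ℂ) + 1) = ((p.1 : ℂ) + 1) + ((p.2 : ℂ) + 1) := by
  push_cast; ring

lemma key33 (J U : ℂ) (hJ : J ≠ 0) (hU : U ≠ 0) (hN : J + U ≠ 0) :
    1/J^3 * (1/U^3) =
      1/J^3 * (1/(J+U)^3) + 1/U^3 * (1/(J+U)^3) + 3 * (1/J^2 * (1/(J+U)^4))
        + 3 * (1/U^2 * (1/(J+U)^4)) + 6 * (1/J * (1/(J+U)^5))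
        + 6 * (1/U * (1/(J+U)^5)) := by
  have hD : J^3 * U^3 * (J+U)^5 ≠ 0 :=
    mul_ne_zero (mul_ne_zero (pow_ne_zero _ hJ) (pow_ne_zero _ hU)) (pow_ne_zero _ hN)
  apply mul_left_cancel₀ hD
  have h0 : J^3 * U^3 * (J+U)^5 * (1/J^3 * (1/U^3)) = (J+U)^5 := by
    field_simp
  have h1 : J^3 * U^3 * (J+U)^5 * (1/J^3 * (1/(J+U)^3)) = U^3 * (J+U)^2 := by
    field_simp
  have h2 : J^3 * U^3 * (J+U)^5 * (1/U^3 * (1/(J+U)^3)) = J^3 * (J+U)^2 := by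
    field_simp
  have h3 : J^3 * U^3 * (J+U)^5 * (3 * (1/J^2 * (1/(J+U)^4))) = 3 * (J * U^3 * (J+U)) := by
    field_simp
  have h4 : J^3 * U^3 * (J+U)^5 * (3 * (1/U^2 * (1/(J+U)^4))) = 3 * (J^3 * U * (J+U)) := by
    field_simp
  have h5 : J^3 * U^3 * (J+U)^5 * (6 * (1/J * (1/(J+U)^5))) = 6 * (J^2 * U^3) := by
    field_simp
  have h6 : J^3 * U^3 * (J+U)^5 * (6 * (1/U * (1/(J+U)^5))) = 6 * (J^3 * U^2) := by
    field_simp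
  rw [mul_add, mul_add, mul_add, mul_add, mul_add, h0, h1, h2, h3, h4, h5, h6]
  ring

lemma key24 (J U : ℂ) (hJ : J ≠ 0) (hU : U ≠ 0) (hN : J + U ≠ 0) :
    1/J^2 * (1/U^4) =
      4 * (1/J * (1/(J+U)^5)) + 1/J^2 * (1/(J+U)^4) + 4 * (1/U * (1/(J+U)^5))
        + 3 * (1/U^2 * (1/(J+U)^4)) + 2 * (1/U^3 * (1/(J+U)^3))
        + 1/U^4 * (1/(J+U)^2) := by
  have hD : J^2 * U^4 * (J+U)^5 ≠ 0 :=
    mul_ne_zero (mul_ne_zero (pow_ne_zero _ hJ) (pow_ne_zero _ hU)) (pow_ne_zero _ hN)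
  apply mul_left_cancel₀ hD
  have h0 : J^2 * U^4 * (J+U)^5 * (1/J^2 * (1/U^4)) = (J+U)^5 := by
    field_simp
  have h1 : J^2 * U^4 * (J+U)^5 * (4 * (1/J * (1/(J+U)^5))) = 4 * (J * U^4) := by
    field_simp
  have h2 : J^2 * U^4 * (J+U)^5 * (1/J^2 * (1/(J+U)^4)) = U^4 * (J+U) := by
    field_simp
  have h3 : J^2 * U^4 * (J+U)^5 * (4 * (1/U * (1/(J+U)^5))) = 4 * (J^2 * U^3) := by
    field_simp
  have h4 : J^2 * U^4 * (J+U)^5 * (3 * (1/U^2 * (1/(J+U)^4))) = 3 * (J^2 * U^2 * (J+U)) := by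
    field_simp
  have h5 : J^2 * U^4 * (J+U)^5 * (2 * (1/U^3 * (1/(J+U)^3))) = 2 * (J^2 * U * (J+U)^2) := by
    field_simp
  have h6 : J^2 * U^4 * (J+U)^5 * (1/U^4 * (1/(J+U)^2)) = J^2 * (J+U)^3 := by
    field_simp
  rw [mul_add, mul_add, mul_add, mul_add, mul_add, h0, h1, h2, h3, h4, h5, h6]
  ring

lemma pf1 (p : ℕ × ℕ) :
    g 3 p.1 * g 3 p.2 =
      F 3 3 p + M 3 3 p + 3 * F 2 4 p + 3 * M 2 4 p + 6 * F 1 5 p + 6 * M 1 5 p := by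
  have hN0 : ((p.1 : ℂ) + 1) + ((p.2 : ℂ) + 1) ≠ 0 := by
    rw [← cast_sum p]
    exact cast_ne _
  simp only [g, F, M, cast_sum, pow_one]
  exact key33 _ _ (cast_ne p.1) (cast_ne p.2) hN0

lemma pf2 (p : ℕ × ℕ) :
    g 2 p.1 * g 4 p.2 =
      4 * F 1 5 p + F 2 4 p + 4 * M 1 5 p + 3 * M 2 4 p + 2 * M 3 3 p + M 4 2 p := by
  have hN0 : ((p.1 : ℂ) + 1) + ((p.2 : ℂ) + 1) ≠ 0 := by
    rw [← cast_sum p]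
    exact cast_ne _
  simp only [g, F, M, cast_sum, pow_one]
  exact key24 _ _ (cast_ne p.1) (cast_ne p.2) hN0

lemma g_mul24 (n : ℕ) : g 2 n * g 4 n = g 6 n := by
  simp only [g]
  rw [div_mul_div_comm, one_mul, ← pow_add]

lemma g_mul33 (n : ℕ) : g 3 n * g 3 n = g 6 n := by
  simp only [g]
  rw [div_mul_div_comm, one_mul, ← pow_add]

lemma zeta_eq (a : ℕ) (ha : 2 ≤ a) : riemannZeta a = z a := by
  rw [zeta_eq_tsum_one_div_nat_add_one_cpow
    (by simp; exact_mod_cast Nat.lt_of_lt_of_le one_lt_two ha)]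
  refine tsum_congr fun n => ?_
  rw [g, Complex.cpow_natCast]

lemma zeta3 : riemannZeta (3 : ℂ) = z 3 := by
  have h := zeta_eq 3 (by norm_num)
  exact_mod_cast h

lemma zeta6 : riemannZeta (6 : ℂ) = z 6 := by
  have h := zeta_eq 6 (by norm_num)
  exact_mod_cast h

lemma target_eq (n : ℕ) :
    (∑ k ∈ Finset.Icc 1 (n + 1), (1 : ℂ) / (k : ℂ) ^ 2) / ((n : ℂ) + 1) ^ 4
      = (∑ i ∈ range n, g 2 i) * g 4 n + g 6 n := by
  have h1 : ∀ m : ℕ, (∑ k ∈ Finset.Icc 1 (m + 1), (1 : ℂ) / (k : ℂ) ^ 2)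
      = ∑ i ∈ range (m + 1), g 2 i := by
    intro m
    induction m with
    | zero => simp [g]
    | succ m ih =>
      rw [Finset.sum_Icc_succ_top (by omega), ih]
      conv_rhs => rw [Finset.sum_range_succ]
      congr 1
      simp only [g]
      push_cast
      ring
  rw [h1 n, Finset.sum_range_succ, div_eq_mul_one_div, add_mul]
  have h4 : (1 : ℂ) / ((n : ℂ) + 1) ^ 4 = g 4 n := rfl
  rw [h4, g_mul24]

end ES24

open ES24 in
/-- The Euler sum `S_{2,4} = Σ_{n≥1} H_n^{(2)}/n⁴` converges and
equals `ζ(3)² - (1/3)ζ(6)`, where `H_n^{(2)} = Σ_{k=1}^{n} 1/k²` and `ζ` is the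
Riemann zeta function. -/
theorem euler_sum_two_four :
    HasSum
      (fun n : ℕ =>
        (∑ k ∈ Finset.Icc 1 (n + 1), (1 : ℂ) / (k : ℂ) ^ 2) / ((n : ℂ) + 1) ^ 4)
      (riemannZeta 3 ^ 2 - (1 / 3) * riemannZeta 6) := by
  have sF33 : Summable (F 3 3) := summable_F (by norm_num) (by norm_num)
  have sF24 : Summable (F 2 4) := summable_F (by norm_num) (by norm_num)
  have sF42 : Summable (F 4 2) := summable_F (by norm_num) (by norm_num)
  have sF15 : Summable (F 1 5) := summable_F15
  have hg2 : HasSum (g 2) (z 2) := hasSum_g (by norm_num)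
  have hg3 : HasSum (g 3) (z 3) := hasSum_g (by norm_num)
  have hg4 : HasSum (g 4) (z 4) := hasSum_g (by norm_num)
  have hg6 : HasSum (g 6) (z 6) := hasSum_g (by norm_num)
  have col24 := hasSum_col sF24
  have col33 := hasSum_col sF33
  have row33 := hasSum_row (by norm_num) sF33
  have row42 := hasSum_row (by norm_num) sF42
  -- the target sum
  have htarget : HasSum
      (fun n : ℕ =>
        (∑ k ∈ Finset.Icc 1 (n + 1), (1 : ℂ) / (k : ℂ) ^ 2) / ((n : ℂ) + 1) ^ 4)
      (Q 2 4 + z 6) := by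
    have h := col24.add hg6
    have he : (fun n : ℕ =>
        (∑ k ∈ Finset.Icc 1 (n + 1), (1 : ℂ) / (k : ℂ) ^ 2) / ((n : ℂ) + 1) ^ 4)
        = fun n => (∑ i ∈ range n, g 2 i) * g 4 n + g 6 n := funext target_eq
    rw [he]
    exact h
  -- E1 : z3*z3 - Q33 = Q33 + z6
  have hmul3 : HasSum (fun j => g 3 j * z 3) (z 3 * z 3) := hg3.mul_right _
  have hdiff3 : HasSum (fun j => g 3 j * ∑ i ∈ range (j + 1), g 3 i) (z 3 * z 3 - Q 3 3) := by
    have h := hmul3.sub row33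
    have he : (fun j => g 3 j * z 3 - g 3 j * (z 3 - ∑ i ∈ range (j + 1), g 3 i))
        = fun j => g 3 j * ∑ i ∈ range (j + 1), g 3 i := by
      funext j; ring
    rw [he] at h
    exact h
  have halt3 : HasSum (fun j => g 3 j * ∑ i ∈ range (j + 1), g 3 i) (Q 3 3 + z 6) := by
    have h := col33.add hg6
    have he : (fun j => (∑ i ∈ range j, g 3 i) * g 3 j + g 6 j)
        = fun j => g 3 j * ∑ i ∈ range (j + 1), g 3 i := by
      funext j
      rw [Finset.sum_range_succ, mul_add, mul_comm (g 3 j) (∑ i ∈ range j, g 3 i), g_mul33]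
    rw [he] at h
    exact h
  have E1 : z 3 * z 3 - Q 3 3 = Q 3 3 + z 6 := hdiff3.unique halt3
  -- E3 : z4*z2 - Q42 = Q24 + z6
  have hmul42 : HasSum (fun j => g 4 j * z 2) (z 4 * z 2) := hg4.mul_right _
  have hdiff42 : HasSum (fun j => g 4 j * ∑ i ∈ range (j + 1), g 2 i) (z 4 * z 2 - Q 4 2) := by
    have h := hmul42.sub row42
    have he : (fun j => g 4 j * z 2 - g 4 j * (z 2 - ∑ i ∈ range (j + 1), g 2 i))
        = fun j => g 4 j * ∑ i ∈ range (j + 1), g 2 i := by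
      funext j; ring
    rw [he] at h
    exact h
  have halt42 : HasSum (fun j => g 4 j * ∑ i ∈ range (j + 1), g 2 i) (Q 2 4 + z 6) := by
    have h := col24.add hg6
    have he : (fun j => (∑ i ∈ range j, g 2 i) * g 4 j + g 6 j)
        = fun j => g 4 j * ∑ i ∈ range (j + 1), g 2 i := by
      funext j
      rw [Finset.sum_range_succ, mul_add, mul_comm (g 4 j) (∑ i ∈ range j, g 2 i),
        mul_comm (g 4 j) (g 2 j), g_mul24]
    rw [he] at h
    exact h
  have E3 : z 4 * z 2 - Q 4 2 = Q 2 4 + z 6 := hdiff42.unique halt42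
  -- R1
  have sn3 : Summable (fun n : ℕ => ‖g 3 n‖) := by
    simpa only [norm_g] using summable_real (a := 3) (by norm_num)
  have sn2 : Summable (fun n : ℕ => ‖g 2 n‖) := by
    simpa only [norm_g] using summable_real (a := 2) (by norm_num)
  have sn4 : Summable (fun n : ℕ => ‖g 4 n‖) := by
    simpa only [norm_g] using summable_real (a := 4) (by norm_num)
  have hlhs1 : HasSum (fun p : ℕ × ℕ => g 3 p.1 * g 3 p.2) (z 3 * z 3) :=
    hg3.mul hg3 (summable_mul_of_summable_norm sn3 sn3)
  have hrhs1 : HasSum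
      (fun p : ℕ × ℕ => F 3 3 p + M 3 3 p + 3 * F 2 4 p + 3 * M 2 4 p + 6 * F 1 5 p + 6 * M 1 5 p)
      (Q 3 3 + Q 3 3 + 3 * Q 2 4 + 3 * Q 2 4 + 6 * Q 1 5 + 6 * Q 1 5) :=
    ((((sF33.hasSum.add (hasSum_mirror sF33)).add (sF24.hasSum.mul_left 3)).add
      ((hasSum_mirror sF24).mul_left 3)).add (sF15.hasSum.mul_left 6)).add
      ((hasSum_mirror sF15).mul_left 6)
  have R1 : z 3 * z 3 = Q 3 3 + Q 3 3 + 3 * Q 2 4 + 3 * Q 2 4 + 6 * Q 1 5 + 6 * Q 1 5 := by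
    refine hlhs1.unique ?_
    have he := funext pf1
    rw [he]
    exact hrhs1
  -- R2
  have hlhs2 : HasSum (fun p : ℕ × ℕ => g 2 p.1 * g 4 p.2) (z 2 * z 4) :=
    hg2.mul hg4 (summable_mul_of_summable_norm sn2 sn4)
  have hrhs2 : HasSum
      (fun p : ℕ × ℕ =>
        4 * F 1 5 p + F 2 4 p + 4 * M 1 5 p + 3 * M 2 4 p + 2 * M 3 3 p + M 4 2 p)
      (4 * Q 1 5 + Q 2 4 + 4 * Q 1 5 + 3 * Q 2 4 + 2 * Q 3 3 + Q 4 2) :=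
    (((((sF15.hasSum.mul_left 4).add sF24.hasSum).add
      ((hasSum_mirror sF15).mul_left 4)).add ((hasSum_mirror sF24).mul_left 3)).add
      ((hasSum_mirror sF33).mul_left 2)).add (hasSum_mirror sF42)
  have R2 : z 2 * z 4 = 4 * Q 1 5 + Q 2 4 + 4 * Q 1 5 + 3 * Q 2 4 + 2 * Q 3 3 + Q 4 2 := by
    refine hlhs2.unique ?_
    have he := funext pf2
    rw [he]
    exact hrhs2
  -- conclude
  have hval : Q 2 4 + z 6 = riemannZeta 3 ^ 2 - 1 / 3 * riemannZeta 6 := by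
    rw [zeta3, zeta6]
    linear_combination (-1 / 3 : ℂ) * E1 - E3 - (2 / 3 : ℂ) * R1 + R2
  rw [← hval]
  exact htarget
end

section
/- For integers n ≥ 0 and k ≥ 0, let a_k(n) := ⌊n/2^{k+2} + 3/4⌋ - ⌊n/2^{k+2} + 1/4⌋ denote the k-th digit of the Gray code representation of n, and let S_GR(n) := Σ_{k≥0} a_k(n) (a finite sum, since a_k(n) = 0 once 2^{k+2} > 4n). Let θ(m) := 1 if the odd part of m is congruent to 1 modulo 4, and θ(m) := -1 if the odd part of m is congruent to 3 modulo 4 (every positive integer m is uniquely of the form 2^i(4j+1) or 2^i(4j+3)). Then for every integer n ≥ 1, S_GR(n) - S_GR(n-1) = θ(n). -/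
/-- The `k`-th digit of the Gray code representation of `n`:
`a_k(n) = ⌊n/2^{k+2} + 3/4⌋ - ⌊n/2^{k+2} + 1/4⌋`. -/
def grayDigit (n k : ℕ) : ℤ :=
  ⌊(n : ℚ) / 2 ^ (k + 2) + 3 / 4⌋ - ⌊(n : ℚ) / 2 ^ (k + 2) + 1 / 4⌋

/-- The digit sum of the Gray code representation of `n`; the sum has only
finitely many nonzero terms since `a_k(n) = 0` once `2^{k+2} > 4n`. -/
noncomputable def graySum (n : ℕ) : ℤ :=
  ∑' k : ℕ, grayDigit n k

/-- `θ(m) = 1` if the odd part of `m` is `≡ 1 (mod 4)`, and `θ(m) = -1` if the odd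
part of `m` is `≡ 3 (mod 4)`. -/
def grayTheta (m : ℕ) : ℤ :=
  if (ordCompl[2] m) % 4 = 1 then 1 else -1

lemma grayDigit_eq (n k : ℕ) :
    grayDigit n k = ((n + 3 * 2 ^ k) / 2 ^ (k + 2) : ℕ) - ((n + 2 ^ k) / 2 ^ (k + 2) : ℕ) := by
  have h1 : (n : ℚ) / 2 ^ (k + 2) + 3 / 4 = ((n + 3 * 2 ^ k : ℕ) : ℤ) / ((2 ^ (k + 2) : ℕ) : ℚ) := by
    push_cast; field_simp; ring
  have h2 : (n : ℚ) / 2 ^ (k + 2) + 1 / 4 = ((n + 2 ^ k : ℕ) : ℤ) / ((2 ^ (k + 2) : ℕ) : ℚ) := by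
    push_cast; field_simp; ring
  rw [grayDigit, h1, h2, Rat.floor_intCast_div_natCast, Rat.floor_intCast_div_natCast,
    ← Int.natCast_div, ← Int.natCast_div]

lemma grayDigit_zero (n k : ℕ) (h : n < 2 ^ k) : grayDigit n k = 0 := by
  rw [grayDigit_eq]
  have h1 : n + 3 * 2 ^ k < 2 ^ (k + 2) := by rw [pow_add]; omega
  have h2 : n + 2 ^ k < 2 ^ (k + 2) := by rw [pow_add]; omega
  rw [Nat.div_eq_of_lt h1, Nat.div_eq_of_lt h2]
  simp

lemma dvd_char (n : ℕ) (hn : n ≠ 0) (c k : ℕ) (hc : c % 2 = 1) :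
    2 ^ (k + 2) ∣ n + c * 2 ^ k ↔
      (k = n.factorization 2 ∧ (ordCompl[2] n + c) % 4 = 0) := by
  have hpos : (0 : ℕ) < 2 ^ k := Nat.pow_pos (by norm_num)
  have hself : 2 ^ (n.factorization 2) * ordCompl[2] n = n :=
    Nat.ordProj_mul_ordCompl_eq_self n 2
  constructor
  · intro h
    have hk : 2 ^ k ∣ n := by
      have h1 : 2 ^ k ∣ n + c * 2 ^ k := (pow_dvd_pow 2 (by omega)).trans h
      have h2 : 2 ^ k ∣ c * 2 ^ k := dvd_mul_left _ _
      have := Nat.dvd_sub h1 h2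
      simpa using this
    have hk1 : ¬ 2 ^ (k + 1) ∣ n := by
      intro hd
      have h1 : 2 ^ (k + 1) ∣ n + c * 2 ^ k := (pow_dvd_pow 2 (by omega)).trans h
      have h2 : 2 ^ (k + 1) ∣ c * 2 ^ k := by
        have := Nat.dvd_sub h1 hd
        simpa using this
      rw [pow_succ, mul_comm c (2 ^ k)] at h2
      have : 2 ∣ c := (Nat.mul_dvd_mul_iff_left hpos).mp h2
      omega
    have hik : k = n.factorization 2 := by
      have hle : k ≤ n.factorization 2 :=
        (Nat.Prime.pow_dvd_iff_le_factorization Nat.prime_two hn).mp hk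
      have hlt : ¬ (k + 1 ≤ n.factorization 2) := fun hh =>
        hk1 ((Nat.Prime.pow_dvd_iff_le_factorization Nat.prime_two hn).mpr hh)
      omega
    refine ⟨hik, ?_⟩
    rw [hik] at h
    have hjpos : (0 : ℕ) < 2 ^ (n.factorization 2) := Nat.pow_pos (by norm_num)
    have e0 : n + c * 2 ^ (n.factorization 2) =
        2 ^ (n.factorization 2) * (ordCompl[2] n + c) := by
      rw [mul_add, hself]; ring
    have e1 : 2 ^ (n.factorization 2 + 2) = 2 ^ (n.factorization 2) * 4 := by rw [pow_add]; ring
    rw [e0, e1] at h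
    have : 4 ∣ ordCompl[2] n + c := (Nat.mul_dvd_mul_iff_left hjpos).mp h
    omega
  · rintro ⟨hik, hmm⟩
    rw [hik]
    have e0 : n + c * 2 ^ (n.factorization 2) =
        2 ^ (n.factorization 2) * (ordCompl[2] n + c) := by
      rw [mul_add, hself]; ring
    have e1 : 2 ^ (n.factorization 2 + 2) = 2 ^ (n.factorization 2) * 4 := by rw [pow_add]; ring
    rw [e0, e1]
    exact Nat.mul_dvd_mul_left _ (by omega)

lemma grayDiff (n k : ℕ) (hn : 1 ≤ n) :
    grayDigit n k - grayDigit (n - 1) k =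
      (if 2 ^ (k + 2) ∣ n + 3 * 2 ^ k then (1 : ℤ) else 0) -
      (if 2 ^ (k + 2) ∣ n + 2 ^ k then (1 : ℤ) else 0) := by
  rw [grayDigit_eq, grayDigit_eq]
  have e3 : n + 3 * 2 ^ k = (n - 1 + 3 * 2 ^ k) + 1 := by omega
  have e1 : n + 2 ^ k = (n - 1 + 2 ^ k) + 1 := by omega
  have d3 : (n + 3 * 2 ^ k) / 2 ^ (k + 2) =
      (n - 1 + 3 * 2 ^ k) / 2 ^ (k + 2) + if 2 ^ (k + 2) ∣ n + 3 * 2 ^ k then 1 else 0 := by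
    rw [e3, Nat.succ_div, ← e3]
  have d1 : (n + 2 ^ k) / 2 ^ (k + 2) =
      (n - 1 + 2 ^ k) / 2 ^ (k + 2) + if 2 ^ (k + 2) ∣ n + 2 ^ k then 1 else 0 := by
    rw [e1, Nat.succ_div, ← e1]
  rw [d3, d1]
  split_ifs <;> push_cast <;> ring

/-- For every integer `n ≥ 1`,
`S_GR(n) - S_GR(n-1) = θ(n)`. -/
theorem gray_code_digit_sum_diff (n : ℕ) (hn : 1 ≤ n) :
    graySum n - graySum (n - 1) = grayTheta n := by
  have hn0 : n ≠ 0 := by omega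
  set i := n.factorization 2 with hi
  set m := ordCompl[2] n with hm
  have hself : 2 ^ i * m = n := Nat.ordProj_mul_ordCompl_eq_self n 2
  have hodd : ¬ 2 ∣ m := Nat.not_dvd_ordCompl Nat.prime_two hn0
  have hm2 : m % 2 = 1 := by omega
  have hilt : i < n + 1 := by
    have h1 : i < 2 ^ i := Nat.lt_two_pow_self (n := i)
    have h2 : 2 ^ i ≤ n := Nat.ordProj_le 2 hn0
    omega
  have hzero : ∀ a : ℕ, a ≤ n → ∀ k ∉ Finset.range (n + 1), grayDigit a k = 0 := by
    intro a ha k hk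
    rw [Finset.mem_range] at hk
    apply grayDigit_zero
    calc a ≤ n := ha
      _ < 2 ^ n := Nat.lt_two_pow_self (n := n)
      _ ≤ 2 ^ k := Nat.pow_le_pow_right (by norm_num) (by omega)
  have hs1 : graySum n = ∑ k ∈ Finset.range (n + 1), grayDigit n k :=
    tsum_eq_sum (hzero n le_rfl)
  have hs2 : graySum (n - 1) = ∑ k ∈ Finset.range (n + 1), grayDigit (n - 1) k :=
    tsum_eq_sum (hzero (n - 1) (by omega))
  rw [hs1, hs2, ← Finset.sum_sub_distrib]
  rw [Finset.sum_eq_single_of_mem i (Finset.mem_range.mpr hilt)]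
  · rw [grayDiff n i hn]
    have c3 : 2 ^ (i + 2) ∣ n + 3 * 2 ^ i ↔ (m + 3) % 4 = 0 := by
      rw [dvd_char n hn0 3 i (by norm_num)]
      exact and_iff_right hi
    have c1 : 2 ^ (i + 2) ∣ n + 2 ^ i ↔ (m + 1) % 4 = 0 := by
      have := dvd_char n hn0 1 i (by norm_num)
      rw [one_mul] at this
      rw [this]
      exact and_iff_right hi
    have hgt : grayTheta n = if m % 4 = 1 then 1 else -1 := rfl
    have h4 : m % 4 = 1 ∨ m % 4 = 3 := by omega
    rcases h4 with h4 | h4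
    · rw [if_pos (c3.mpr (by omega)), if_neg (fun hh => by have := c1.mp hh; omega),
        hgt, if_pos h4]
      norm_num
    · rw [if_neg (fun hh => by have := c3.mp hh; omega), if_pos (c1.mpr (by omega)),
        hgt, if_neg (by omega)]
      norm_num
  · intro k hk hki
    rw [grayDiff n k hn]
    have h3 : ¬ 2 ^ (k + 2) ∣ n + 3 * 2 ^ k := by
      rw [dvd_char n hn0 3 k (by norm_num)]
      tauto
    have h1 : ¬ 2 ^ (k + 2) ∣ n + 2 ^ k := by
      have := dvd_char n hn0 1 k (by norm_num)
      rw [one_mul] at this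
      rw [this]
      tauto
    simp [h3, h1]
end
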